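/- arXiv:2111.12633 — 3 statements merged into one kernel-verified Lean document; each statement's English description precedes it below -/
import Mathlib

section
/- Let 0 < ε ≤ 1, α > 0, m > 0, T > 0. Suppose the linear system Σ(ε,m,T) is unstable, i.e. Δ(ε,m,T) > 0. Then the density-dependent system D(ε,α,m,T) is uniformly persistent: there exist strictly positive constants a < b such that every solution (x₁, x₂) of D(ε,α,m,T) with x₁(0) > 0 and x₂(0) > 0 satisfies a ≤ x₁(t) ≤ b and a ≤ x₂(t) ≤ b for all sufficiently large t. -/
open Real Filter Set
open Topology

/-- The `2T`-periodic square wave: `+1` on `[0,T)`, `-1` on `[T,2T)`. -/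
noncomputable def squareWave (T t : ℝ) : ℝ :=
  if Int.fract (t / (2 * T)) < 1 / 2 then 1 else -1

/-- A solution of the switched system `F(m,T)`: a continuous function satisfying
`dV/dt = 2(u(t) - m sinh V)` away from the switching times `nT`, `n ∈ ℤ`. -/
def IsSolF (m T : ℝ) (V : ℝ → ℝ) : Prop :=
  Continuous V ∧ ∀ t : ℝ, (∀ n : ℤ, t ≠ n * T) →
    HasDerivAt V (2 * (squareWave T t - m * Real.sinh (V t))) t

/-- The quantity `Δ(ε,m,T)` associated with the periodic solution `P` of `F(m,T)`. -/
noncomputable def DeltaP (ε m T : ℝ) (P : ℝ → ℝ) : ℝ :=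
  (1 / (2 * T)) * ∫ s in (0:ℝ)..(2 * T), 2 * (m * Real.cosh (P s) - m - ε)

/-- A solution of the density-dependent switched system `D(ε,α,m,T)`. -/
def IsSolD (ε α m T : ℝ) (x₁ x₂ : ℝ → ℝ) : Prop :=
  Continuous x₁ ∧ Continuous x₂ ∧ ∀ t : ℝ, (∀ n : ℤ, t ≠ n * T) →
    HasDerivAt x₁ ((squareWave T t - ε) * x₁ t - α * (x₁ t) ^ 2 + m * (x₂ t - x₁ t)) t ∧
    HasDerivAt x₂ ((-squareWave T t - ε) * x₂ t - α * (x₂ t) ^ 2 + m * (x₁ t - x₂ t)) t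




lemma slope_nonneg_of_neg_left {e : ℝ → ℝ} {L s : ℝ} (hd : HasDerivAt e L s)
    (h0 : e s = 0) (hpos : 0 < s) (hneg : ∀ t, 0 ≤ t → t < s → e t < 0) : 0 ≤ L := by
  have hslope : Tendsto (slope e s) (𝓝[≠] s) (𝓝 L) := hasDerivAt_iff_tendsto_slope.mp hd
  have h2 : Tendsto (slope e s) (𝓝[<] s) (𝓝 L) :=
    hslope.mono_left (nhdsWithin_mono s (fun x hx => ne_of_lt hx))
  refine ge_of_tendsto h2 ?_
  filter_upwards [Ioo_mem_nhdsLT hpos] with t ht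
  have he : e t < 0 := hneg t ht.1.le ht.2
  have hts : t - s < 0 := by linarith [ht.2]
  have : slope e s t = e t / (t - s) := by rw [slope_def_field, h0, sub_zero]
  rw [this]
  exact le_of_lt (div_pos_of_neg_of_neg he hts)

lemma slope_nonpos_of_pos_left {e : ℝ → ℝ} {L s : ℝ} (hd : HasDerivAt e L s)
    (h0 : e s = 0) (hpos : 0 < s) (hposl : ∀ t, 0 ≤ t → t < s → 0 < e t) : L ≤ 0 := by
  have := slope_nonneg_of_neg_left (e := fun t => -(e t)) (hd.neg) (by simp [h0]) hpos
    (fun t ht hts => by simpa using (hposl t ht hts))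
  linarith

/-- Comparison engine: two continuous functions stay strictly below a strictly-increasing
(in the parameter) family of barriers, given a strict differential inequality at contact
points outside a countable set `S`. -/
lemma engine {S : Set ℝ} (hS : S.Countable) {y₁ y₂ : ℝ → ℝ} {Z : ℝ → ℝ → ℝ}
    (hy₁ : Continuous y₁) (hy₂ : Continuous y₂)
    (hZ : ∀ c ∈ Ioo (0:ℝ) 1, ContinuousOn (Z c) (Ici 0))
    (hmono : ∀ t : ℝ, 0 ≤ t → StrictMonoOn (fun c => Z c t) (Ioo (0:ℝ) 1))
    (hinit : ∀ c ∈ Ioo (0:ℝ) 1, y₁ 0 < Z c 0 ∧ y₂ 0 < Z c 0)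
    (hcon₁ : ∀ c ∈ Ioo (0:ℝ) 1, ∀ s, 0 < s → s ∉ S → y₁ s = Z c s → y₂ s ≤ Z c s →
      ∃ L L', HasDerivAt y₁ L s ∧ HasDerivAt (Z c) L' s ∧ L < L')
    (hcon₂ : ∀ c ∈ Ioo (0:ℝ) 1, ∀ s, 0 < s → s ∉ S → y₂ s = Z c s → y₁ s ≤ Z c s →
      ∃ L L', HasDerivAt y₂ L s ∧ HasDerivAt (Z c) L' s ∧ L < L') :
    ∀ c ∈ Ioo (0:ℝ) 1, ∀ t, 0 ≤ t → y₁ t < Z c t ∧ y₂ t < Z c t := by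
  by_contra hcontra
  push_neg at hcontra
  obtain ⟨c₀, hc₀, t₀v, ht₀v, hviol₀⟩ := hcontra
  have hviol : Z c₀ t₀v ≤ y₁ t₀v ∨ Z c₀ t₀v ≤ y₂ t₀v := by
    by_cases h : y₁ t₀v < Z c₀ t₀v
    · exact Or.inr (hviol₀ h)
    · exact Or.inl (not_lt.mp h)
  clear hviol₀
  -- For every c < c₀ there is a first violation, and it must be a contact point in S.
  have key : ∀ c ∈ Ioo (0:ℝ) c₀, ∃ s ∈ S, 0 ≤ s ∧ (y₁ s = Z c s ∨ y₂ s = Z c s) := by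
    intro c hc
    have hc1 : c ∈ Ioo (0:ℝ) 1 := ⟨hc.1, hc.2.trans hc₀.2⟩
    have hZlt : Z c t₀v < Z c₀ t₀v := hmono t₀v ht₀v hc1 hc₀ hc.2
    set V : Set ℝ := (Ici 0 ∩ (fun t => Z c t - y₁ t) ⁻¹' Iic 0) ∪
      (Ici 0 ∩ (fun t => Z c t - y₂ t) ⁻¹' Iic 0) with hV
    have hVmem : ∀ t, t ∈ V ↔ (0 ≤ t ∧ (Z c t ≤ y₁ t ∨ Z c t ≤ y₂ t)) := by
      intro t
      simp only [hV, mem_union, mem_inter_iff, mem_Ici, mem_preimage, mem_Iic, sub_nonpos,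
        sub_nonneg]
      constructor
      · rintro (⟨h1, h2⟩ | ⟨h1, h2⟩) <;> exact ⟨h1, by tauto⟩
      · rintro ⟨h1, h2 | h2⟩
        · exact Or.inl ⟨h1, by linarith⟩
        · exact Or.inr ⟨h1, by linarith⟩
    have hclosed : IsClosed V := by
      refine IsClosed.union ?_ ?_ <;>
      · refine ContinuousOn.preimage_isClosed_of_isClosed ?_ isClosed_Ici isClosed_Iic
        exact ((hZ c hc1).sub (by fun_prop))
    have hVne : V.Nonempty := by
      refine ⟨t₀v, (hVmem t₀v).mpr ⟨ht₀v, ?_⟩⟩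
      rcases hviol with h | h
      · exact Or.inl (by linarith)
      · exact Or.inr (by linarith)
    have hVbdd : BddBelow V := ⟨0, fun x hx => ((hVmem x).mp hx).1⟩
    set s := sInf V with hs
    have hsV : s ∈ V := hclosed.csInf_mem hVne hVbdd
    have hs0 : 0 ≤ s := ((hVmem s).mp hsV).1
    have hspos : 0 < s := by
      rcases hs0.lt_or_eq with h | h
      · exact h
      · exfalso
        obtain ⟨h1, h2⟩ := hinit c hc1
        rcases ((hVmem s).mp hsV).2 with hh | hh <;> rw [← h] at hh <;> linarith
    have hbefore : ∀ t, 0 ≤ t → t < s → y₁ t < Z c t ∧ y₂ t < Z c t := by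
      intro t ht hts
      by_contra hcon
      have : t ∈ V := by
        rw [hVmem]
        refine ⟨ht, ?_⟩
        rw [not_and_or, not_lt, not_lt] at hcon
        tauto
      exact absurd (csInf_le hVbdd this) (not_le.mpr hts)
    -- closure: at s both are ≤
    have hcl : ∀ y : ℝ → ℝ, Continuous y → (∀ t, 0 ≤ t → t < s → y t < Z c t) →
        y s ≤ Z c s := by
      intro y hy hlt
      set F := Ici (0:ℝ) ∩ (fun t => y t - Z c t) ⁻¹' Iic 0 with hFdef
      have hF : IsClosed F :=
        ContinuousOn.preimage_isClosed_of_isClosed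
          (hy.continuousOn.sub (hZ c hc1)) isClosed_Ici isClosed_Iic
      have hsub : Ico (0:ℝ) s ⊆ F := by
        intro t ht
        exact ⟨ht.1, by simp only [mem_preimage, mem_Iic]; linarith [hlt t ht.1 ht.2]⟩
      have hscl : s ∈ closure (Ico (0:ℝ) s) := by
        rw [closure_Ico hspos.ne]; exact ⟨hs0, le_rfl⟩
      have : s ∈ F := hF.closure_subset_iff.mpr hsub hscl
      have := this.2
      simp only [mem_preimage, mem_Iic] at this
      linarith
    have hle₁ : y₁ s ≤ Z c s := hcl y₁ hy₁ (fun t a b => (hbefore t a b).1)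
    have hle₂ : y₂ s ≤ Z c s := hcl y₂ hy₂ (fun t a b => (hbefore t a b).2)
    have heq : y₁ s = Z c s ∨ y₂ s = Z c s := by
      rcases ((hVmem s).mp hsV).2 with h | h
      · exact Or.inl (le_antisymm hle₁ h)
      · exact Or.inr (le_antisymm hle₂ h)
    refine ⟨s, ?_, hs0, heq⟩
    by_contra hnS
    rcases heq with heq | heq
    · obtain ⟨L, L', hdy, hdZ, hLL⟩ := hcon₁ c hc1 s hspos hnS heq hle₂
      have he0 : (fun t => y₁ t - Z c t) s = 0 := by simp [heq]
      have := slope_nonneg_of_neg_left (hdy.sub hdZ) he0 hspos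
        (fun t a b => by simpa using sub_neg.mpr (hbefore t a b).1)
      linarith
    · obtain ⟨L, L', hdy, hdZ, hLL⟩ := hcon₂ c hc1 s hspos hnS heq hle₁
      have he0 : (fun t => y₂ t - Z c t) s = 0 := by simp [heq]
      have := slope_nonneg_of_neg_left (hdy.sub hdZ) he0 hspos
        (fun t a b => by simpa using sub_neg.mpr (hbefore t a b).2)
      linarith
  -- countability contradiction
  have hsub : Ioo (0:ℝ) c₀ ⊆ ⋃ s ∈ S,
      ({c | c ∈ Ioo (0:ℝ) 1 ∧ 0 ≤ s ∧ y₁ s = Z c s} ∪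
       {c | c ∈ Ioo (0:ℝ) 1 ∧ 0 ≤ s ∧ y₂ s = Z c s}) := by
    intro c hc
    obtain ⟨s, hsS, hs0, heq⟩ := key c hc
    have hc1 : c ∈ Ioo (0:ℝ) 1 := ⟨hc.1, hc.2.trans hc₀.2⟩
    refine mem_biUnion hsS ?_
    rcases heq with h | h
    · exact Or.inl ⟨hc1, hs0, h⟩
    · exact Or.inr ⟨hc1, hs0, h⟩
  have hcnt : (Ioo (0:ℝ) c₀).Countable := by
    refine Set.Countable.mono hsub ?_
    refine hS.biUnion (fun s _ => Set.Countable.union ?_ ?_) <;>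
    · refine Set.Subsingleton.countable ?_
      intro a ha b hb
      exact (hmono s ha.2.1).injOn ha.1 hb.1 (by rw [← ha.2.2, ← hb.2.2])
  have hμ := hcnt.measure_zero (MeasureTheory.volume : MeasureTheory.Measure ℝ)
  rw [Real.volume_Ioo] at hμ
  simp only [sub_zero, ENNReal.ofReal_eq_zero] at hμ
  linarith [hc₀.1]

lemma deriv_y₁ {α ε m T : ℝ} {P G x₁ x₂ : ℝ → ℝ} {s : ℝ}
    (hx : HasDerivAt x₁ ((squareWave T s - ε) * x₁ s - α * (x₁ s)^2 + m * (x₂ s - x₁ s)) s)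
    (hPds : HasDerivAt P (2*(squareWave T s - m * Real.sinh (P s))) s)
    (hGs : HasDerivAt G (m * Real.cosh (P s) - m - ε) s) :
    HasDerivAt (fun t => x₁ t * Real.exp (-(G t + P t / 2)))
      (m * Real.exp (-(P s)) * (x₂ s * Real.exp (-(G s - P s / 2)) - x₁ s * Real.exp (-(G s + P s / 2)))
        - α * Real.exp (G s + P s / 2) * (x₁ s * Real.exp (-(G s + P s / 2)))^2) s := by
  have hA : HasDerivAt (fun t => -(G t + P t / 2))
      (-((m * Real.cosh (P s) - m - ε) + (2*(squareWave T s - m * Real.sinh (P s)))/2)) s :=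
    (hGs.add (hPds.div_const 2)).neg
  have hE := hA.exp
  have hprod := hx.mul hE
  refine hprod.congr_deriv ?_
  have c1 : Real.cosh (P s) = (Real.exp (P s) + Real.exp (-(P s)))/2 := Real.cosh_eq (P s)
  have c2 : Real.sinh (P s) = (Real.exp (P s) - Real.exp (-(P s)))/2 := Real.sinh_eq (P s)
  have e1 : Real.exp (-(G s + P s / 2)) = (Real.exp (G s) * Real.exp (P s / 2))⁻¹ := by
    rw [← Real.exp_add, Real.exp_neg]
  have e2 : Real.exp (-(G s - P s / 2)) = Real.exp (P s / 2) / Real.exp (G s) := by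
    rw [neg_sub, Real.exp_sub]
  have e3 : Real.exp (P s) = Real.exp (P s / 2) ^ 2 := by
    rw [sq, ← Real.exp_add]; ring_nf
  have e4 : Real.exp (-(P s)) = (Real.exp (P s / 2) ^ 2)⁻¹ := by
    rw [Real.exp_neg, e3]
  have e5 : Real.exp (G s + P s / 2) = Real.exp (G s) * Real.exp (P s / 2) := Real.exp_add _ _
  have hg : Real.exp (G s) ≠ 0 := Real.exp_ne_zero _
  have hq : Real.exp (P s / 2) ≠ 0 := Real.exp_ne_zero _
  rw [c1, c2, e1, e2, e3, e4, e5]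
  field_simp
  ring

lemma deriv_y₂ {α ε m T : ℝ} {P G x₁ x₂ : ℝ → ℝ} {s : ℝ}
    (hx : HasDerivAt x₂ ((-squareWave T s - ε) * x₂ s - α * (x₂ s)^2 + m * (x₁ s - x₂ s)) s)
    (hPds : HasDerivAt P (2*(squareWave T s - m * Real.sinh (P s))) s)
    (hGs : HasDerivAt G (m * Real.cosh (P s) - m - ε) s) :
    HasDerivAt (fun t => x₂ t * Real.exp (-(G t - P t / 2)))
      (m * Real.exp (P s) * (x₁ s * Real.exp (-(G s + P s / 2)) - x₂ s * Real.exp (-(G s - P s / 2)))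
        - α * Real.exp (G s - P s / 2) * (x₂ s * Real.exp (-(G s - P s / 2)))^2) s := by
  have hA : HasDerivAt (fun t => -(G t - P t / 2))
      (-((m * Real.cosh (P s) - m - ε) - (2*(squareWave T s - m * Real.sinh (P s)))/2)) s :=
    (hGs.sub (hPds.div_const 2)).neg
  have hE := hA.exp
  have hprod := hx.mul hE
  refine hprod.congr_deriv ?_
  have c1 : Real.cosh (P s) = (Real.exp (P s) + Real.exp (-(P s)))/2 := Real.cosh_eq (P s)
  have c2 : Real.sinh (P s) = (Real.exp (P s) - Real.exp (-(P s)))/2 := Real.sinh_eq (P s)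
  have e1 : Real.exp (-(G s + P s / 2)) = (Real.exp (G s) * Real.exp (P s / 2))⁻¹ := by
    rw [← Real.exp_add, Real.exp_neg]
  have e2 : Real.exp (-(G s - P s / 2)) = Real.exp (P s / 2) / Real.exp (G s) := by
    rw [neg_sub, Real.exp_sub]
  have e3 : Real.exp (P s) = Real.exp (P s / 2) ^ 2 := by
    rw [sq, ← Real.exp_add]; ring_nf
  have e4 : Real.exp (-(P s)) = (Real.exp (P s / 2) ^ 2)⁻¹ := by
    rw [Real.exp_neg, e3]
  have e6 : Real.exp (G s - P s / 2) = Real.exp (G s) / Real.exp (P s / 2) := Real.exp_sub _ _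
  have hg : Real.exp (G s) ≠ 0 := Real.exp_ne_zero _
  have hq : Real.exp (P s / 2) ≠ 0 := Real.exp_ne_zero _
  rw [c1, c2, e1, e2, e3, e4, e6]
  field_simp
  ring

lemma periodic_abs_bound {f : ℝ → ℝ} {c : ℝ} (hf : Continuous f)
    (hper : Function.Periodic f c) (hc : 0 < c) : ∃ M, 0 ≤ M ∧ ∀ t, |f t| ≤ M := by
  obtain ⟨M, hM⟩ := (isCompact_Icc (a := (0:ℝ)) (b := c)).exists_bound_of_continuousOn
    hf.continuousOn
  refine ⟨M, le_trans (abs_nonneg _) (hM 0 ⟨le_rfl, hc.le⟩), fun t => ?_⟩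
  rw [← hper.sub_int_mul_eq ⌊t / c⌋]
  exact hM _ ⟨Int.sub_floor_div_mul_nonneg t hc, (Int.sub_floor_div_mul_lt t hc).le⟩

set_option maxHeartbeats 1000000 in
theorem statement17 (ε α m T : ℝ) (hε : 0 < ε) (hε1 : ε ≤ 1) (hα : 0 < α)
    (hm : 0 < m) (hT : 0 < T)
    (P : ℝ → ℝ) (hP : IsSolF m T P) (hPper : Function.Periodic P (2 * T))
    (hΔ : 0 < DeltaP ε m T P) :
    ∃ a b : ℝ, 0 < a ∧ a < b ∧
      ∀ x₁ x₂ : ℝ → ℝ, IsSolD ε α m T x₁ x₂ → 0 < x₁ 0 → 0 < x₂ 0 →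
        ∃ t₀ : ℝ, ∀ t : ℝ, t₀ ≤ t →
          x₁ t ∈ Set.Icc a b ∧ x₂ t ∈ Set.Icc a b := by
  classical
  obtain ⟨hPc, hPd⟩ := hP
  have hT2 : (0:ℝ) < 2 * T := by linarith
  -- switching set
  set S : Set ℝ := Set.range (fun n : ℤ => (n:ℝ) * T) with hSdef
  have hScount : S.Countable := Set.countable_range _
  have hSnot : ∀ t : ℝ, t ∉ S → (∀ n : ℤ, t ≠ n * T) := by
    intro t ht n hn; exact ht ⟨n, hn.symm⟩
  -- growth rate
  set δ : ℝ := DeltaP ε m T P / 2 with hδdef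
  have hδ : 0 < δ := by rw [hδdef]; linarith
  -- the antiderivative G
  set f : ℝ → ℝ := fun s => m * Real.cosh (P s) - m - ε with hfdef
  have hfc : Continuous f := by
    rw [hfdef]; fun_prop
  have hfper : Function.Periodic f (2 * T) := by
    intro t; simp only [hfdef]; rw [hPper t]
  set G : ℝ → ℝ := fun t => ∫ s in (0:ℝ)..t, f s with hGdef
  have hGd : ∀ t, HasDerivAt G (f t) t := by
    intro t
    exact intervalIntegral.integral_hasDerivAt_right (hfc.intervalIntegrable 0 t)
      (hfc.stronglyMeasurableAtFilter _ _) hfc.continuousAt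
  have hGc : Continuous G := continuous_iff_continuousAt.mpr fun t => (hGd t).continuousAt
  have hint : (∫ s in (0:ℝ)..(2*T), f s) = 2 * T * δ := by
    have h2 : (∫ s in (0:ℝ)..(2*T), 2 * f s) = 2 * ∫ s in (0:ℝ)..(2*T), f s :=
      intervalIntegral.integral_const_mul 2 f
    have h3 : DeltaP ε m T P = (1/(2*T)) * (2 * ∫ s in (0:ℝ)..(2*T), f s) := by
      rw [DeltaP, ← h2]
    rw [hδdef, h3]; field_simp
  have hGadd : ∀ t, G (t + 2*T) = G t + 2*T*δ := by
    intro t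
    have hadj : (∫ s in (0:ℝ)..t, f s) + (∫ s in t..(t+2*T), f s)
        = ∫ s in (0:ℝ)..(t+2*T), f s :=
      intervalIntegral.integral_add_adjacent_intervals (hfc.intervalIntegrable _ _)
        (hfc.intervalIntegrable _ _)
    have hper' : (∫ s in t..(t+2*T), f s) = ∫ s in (0:ℝ)..(0+2*T), f s :=
      hfper.intervalIntegral_add_eq t 0
    have : G (t + 2*T) = G t + ∫ s in t..(t+2*T), f s := by
      simp only [hGdef]; rw [← hadj]
    rw [this, hper', zero_add, hint]
  -- bounded periodic parts
  set H : ℝ → ℝ := fun t => G t - δ * t with hHdef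
  have hHper : Function.Periodic H (2*T) := by
    intro t; simp only [hHdef]; rw [hGadd t]; ring
  have hHc : Continuous H := by
    rw [hHdef]; exact hGc.sub (continuous_const.mul continuous_id)
  obtain ⟨Mg, hMg0, hMg⟩ := periodic_abs_bound hHc hHper hT2
  obtain ⟨Mp, hMp0, hMp⟩ := periodic_abs_bound hPc hPper hT2
  set K : ℝ := Real.exp (Mg + Mp / 2) with hKdef
  have hKpos : 0 < K := Real.exp_pos _
  have hK1 : 1 ≤ K := by
    rw [hKdef, ← Real.exp_zero]; exact Real.exp_le_exp.mpr (by linarith)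
  -- bounds on the exponentials
  have hp1 : ∀ t : ℝ, Real.exp (δ*t) / K ≤ Real.exp (G t + P t / 2) ∧
      Real.exp (G t + P t / 2) ≤ K * Real.exp (δ*t) := by
    intro t
    have h1 : G t + P t / 2 = δ * t + (H t + P t / 2) := by simp only [hHdef]; ring
    have h3 : |P t / 2| ≤ Mp / 2 := by
      rw [abs_div, abs_two]; linarith [hMp t]
    have h2 : |H t + P t / 2| ≤ Mg + Mp / 2 := by
      calc |H t + P t/2| ≤ |H t| + |P t / 2| := abs_add_le _ _
        _ ≤ Mg + Mp/2 := add_le_add (hMg t) h3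
    obtain ⟨hl, hr⟩ := abs_le.mp h2
    constructor
    · have he : Real.exp (δ*t) / K = Real.exp (δ*t - (Mg + Mp/2)) := by
        rw [Real.exp_sub, hKdef]
      rw [he, h1]; exact Real.exp_le_exp.mpr (by linarith)
    · have he : K * Real.exp (δ*t) = Real.exp (δ*t + (Mg + Mp/2)) := by
        rw [Real.exp_add, hKdef]; ring
      rw [he, h1]; exact Real.exp_le_exp.mpr (by linarith)
  have hp2 : ∀ t : ℝ, Real.exp (δ*t) / K ≤ Real.exp (G t - P t / 2) ∧
      Real.exp (G t - P t / 2) ≤ K * Real.exp (δ*t) := by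
    intro t
    have h1 : G t - P t / 2 = δ * t + (H t - P t / 2) := by simp only [hHdef]; ring
    have h3 : |P t / 2| ≤ Mp / 2 := by
      rw [abs_div, abs_two]; linarith [hMp t]
    have h4 : |H t - P t / 2| ≤ |H t| + |P t / 2| := by
      rw [sub_eq_add_neg]
      exact (abs_add_le _ _).trans (by rw [abs_neg])
    have h2 : |H t - P t / 2| ≤ Mg + Mp / 2 :=
      h4.trans (add_le_add (hMg t) h3)
    obtain ⟨hl, hr⟩ := abs_le.mp h2
    constructor
    · have he : Real.exp (δ*t) / K = Real.exp (δ*t - (Mg + Mp/2)) := by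
        rw [Real.exp_sub, hKdef]
      rw [he, h1]; exact Real.exp_le_exp.mpr (by linarith)
    · have he : K * Real.exp (δ*t) = Real.exp (δ*t + (Mg + Mp/2)) := by
        rw [Real.exp_add, hKdef]; ring
      rw [he, h1]; exact Real.exp_le_exp.mpr (by linarith)
  -- the uniform constants
  refine ⟨δ/(4*K^2*α), 4*K^2*δ/α, by positivity, ?_, ?_⟩
  · have hK2 : 1 ≤ K^2 := by nlinarith
    rw [div_lt_div_iff₀ (by positivity) (by positivity)]
    nlinarith [mul_pos hδ hα, sq_nonneg (K^2 - 1)]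
  intro x₁ x₂ hsol hx10 hx20
  obtain ⟨hx₁c, hx₂c, hxd⟩ := hsol
  set y₁ : ℝ → ℝ := fun t => x₁ t * Real.exp (-(G t + P t / 2)) with hy₁def
  set y₂ : ℝ → ℝ := fun t => x₂ t * Real.exp (-(G t - P t / 2)) with hy₂def
  have hy₁c : Continuous y₁ := by rw [hy₁def]; fun_prop
  have hy₂c : Continuous y₂ := by rw [hy₂def]; fun_prop
  have hy₁d : ∀ s, s ∉ S → HasDerivAt y₁
      (m * Real.exp (-(P s)) * (y₂ s - y₁ s)
        - α * Real.exp (G s + P s / 2) * (y₁ s)^2) s := by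
    intro s hs
    have h := deriv_y₁ (α := α) (ε := ε) (hxd s (hSnot s hs)).1 (hPd s (hSnot s hs)) (hGd s)
    simpa [hy₁def, hy₂def, mul_sub, sub_mul] using h
  have hy₂d : ∀ s, s ∉ S → HasDerivAt y₂
      (m * Real.exp (P s) * (y₁ s - y₂ s)
        - α * Real.exp (G s - P s / 2) * (y₂ s)^2) s := by
    intro s hs
    have h := deriv_y₂ (α := α) (ε := ε) (hxd s (hSnot s hs)).2 (hPd s (hSnot s hs)) (hGd s)
    simpa [hy₁def, hy₂def, mul_sub, sub_mul] using h
  have hy10 : 0 < y₁ 0 := mul_pos hx10 (Real.exp_pos _)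
  have hy20 : 0 < y₂ 0 := mul_pos hx20 (Real.exp_pos _)
  -- barrier families
  set Y0 : ℝ := max (max (y₁ 0) (y₂ 0)) 0 + 1 with hY0def
  have hY0 : 0 < Y0 := by
    have := le_max_right (max (y₁ 0) (y₂ 0)) 0
    rw [hY0def]; linarith
  have hy1Y : y₁ 0 < Y0 := by
    have h := le_max_left (y₁ 0) (y₂ 0)
    have h2 := le_max_left (max (y₁ 0) (y₂ 0)) 0
    rw [hY0def]; linarith
  have hy2Y : y₂ 0 < Y0 := by
    have h := le_max_right (y₁ 0) (y₂ 0)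
    have h2 := le_max_left (max (y₁ 0) (y₂ 0)) 0
    rw [hY0def]; linarith
  set w0 : ℝ := min (y₁ 0) (y₂ 0) with hw0def
  have hw0 : 0 < w0 := lt_min hy10 hy20
  have hw1 : w0 ≤ y₁ 0 := min_le_left _ _
  have hw2 : w0 ≤ y₂ 0 := min_le_right _ _
  set B : ℝ := α / (2*K*δ) with hBdef
  have hB : 0 < B := by rw [hBdef]; positivity
  set C2 : ℝ := 2*K*α/δ with hC2def
  have hC2 : 0 < C2 := by rw [hC2def]; positivity
  set Z : ℝ → ℝ → ℝ := fun c t => ((2 - c)/(2*Y0) + B*(Real.exp (δ*t) - 1))⁻¹ with hZdef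
  set Wb : ℝ → ℝ → ℝ := fun c t => ((1 + c)/w0 + C2*(Real.exp (δ*t) - 1))⁻¹ with hWdef
  have hexp1 : ∀ t : ℝ, 0 ≤ t → 1 ≤ Real.exp (δ*t) := by
    intro t ht
    rw [← Real.exp_zero]
    exact Real.exp_le_exp.mpr (by positivity)
  have hdZ : ∀ c ∈ Ioo (0:ℝ) 1, ∀ t:ℝ, 0 ≤ t →
      0 < (2 - c)/(2*Y0) + B*(Real.exp (δ*t) - 1) := by
    intro c hc t ht
    have h1 : 0 < (2 - c)/(2*Y0) := div_pos (by linarith [hc.2]) (by linarith)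
    have h2 : 0 ≤ B*(Real.exp (δ*t) - 1) := mul_nonneg hB.le (by linarith [hexp1 t ht])
    linarith
  have hdW : ∀ c ∈ Ioo (0:ℝ) 1, ∀ t:ℝ, 0 ≤ t →
      0 < (1 + c)/w0 + C2*(Real.exp (δ*t) - 1) := by
    intro c hc t ht
    have h1 : 0 < (1 + c)/w0 := div_pos (by linarith [hc.1]) hw0
    have h2 : 0 ≤ C2*(Real.exp (δ*t) - 1) := mul_nonneg hC2.le (by linarith [hexp1 t ht])
    linarith
  have hZpos : ∀ c ∈ Ioo (0:ℝ) 1, ∀ t:ℝ, 0 ≤ t → 0 < Z c t := by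
    intro c hc t ht
    rw [hZdef]; exact inv_pos.mpr (hdZ c hc t ht)
  have hWpos : ∀ c ∈ Ioo (0:ℝ) 1, ∀ t:ℝ, 0 ≤ t → 0 < Wb c t := by
    intro c hc t ht
    rw [hWdef]; exact inv_pos.mpr (hdW c hc t ht)
  -- derivative of the barriers
  have hZd : ∀ c ∈ Ioo (0:ℝ) 1, ∀ s:ℝ, 0 < s → HasDerivAt (Z c)
      (-(B*(Real.exp (δ*s)*δ)) / ((2 - c)/(2*Y0) + B*(Real.exp (δ*s) - 1))^2) s := by
    intro c hc s hs
    have hd1 : HasDerivAt (fun t : ℝ => δ * t) δ s := by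
      simpa using (hasDerivAt_id s).const_mul δ
    have hd2 : HasDerivAt (fun t => Real.exp (δ*t)) (Real.exp (δ*s) * δ) s := hd1.exp
    have hd3 : HasDerivAt (fun t => (2 - c)/(2*Y0) + B*(Real.exp (δ*t) - 1))
        (B*(Real.exp (δ*s)*δ)) s := by
      simpa using ((hd2.sub_const 1).const_mul B).const_add ((2-c)/(2*Y0))
    have := hd3.inv (hdZ c hc s hs.le).ne'
    rw [hZdef]
    exact this
  have hWd : ∀ c ∈ Ioo (0:ℝ) 1, ∀ s:ℝ, 0 < s → HasDerivAt (Wb c)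
      (-(C2*(Real.exp (δ*s)*δ)) / ((1 + c)/w0 + C2*(Real.exp (δ*s) - 1))^2) s := by
    intro c hc s hs
    have hd1 : HasDerivAt (fun t : ℝ => δ * t) δ s := by
      simpa using (hasDerivAt_id s).const_mul δ
    have hd2 : HasDerivAt (fun t => Real.exp (δ*t)) (Real.exp (δ*s) * δ) s := hd1.exp
    have hd3 : HasDerivAt (fun t => (1 + c)/w0 + C2*(Real.exp (δ*t) - 1))
        (C2*(Real.exp (δ*s)*δ)) s := by
      simpa using ((hd2.sub_const 1).const_mul C2).const_add ((1+c)/w0)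
    have := hd3.inv (hdW c hc s hs.le).ne'
    rw [hWdef]
    exact this
  -- upper comparison
  have hupper : ∀ c ∈ Ioo (0:ℝ) 1, ∀ t, 0 ≤ t → y₁ t < Z c t ∧ y₂ t < Z c t := by
    apply engine hScount hy₁c hy₂c
    · -- continuity
      intro c hc
      rw [hZdef]
      apply ContinuousOn.inv₀
      · fun_prop
      · intro t ht; exact (hdZ c hc t ht).ne'
    · -- monotone in c
      intro t ht a ha b hb hab
      simp only [hZdef]
      have hdZ' := hdZ
      have hdb := hdZ b hb t ht
      have hden : (2 - b)/(2*Y0) + B*(Real.exp (δ*t) - 1)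
          < (2 - a)/(2*Y0) + B*(Real.exp (δ*t) - 1) := by
        have h2 : (2 - b)/(2*Y0) < (2 - a)/(2*Y0) :=
          (div_lt_div_iff_of_pos_right (by linarith)).mpr (by linarith)
        linarith
      exact inv_strictAnti₀ hdb hden
    · -- initial condition
      intro c hc
      have hZ0 : Z c 0 = 2*Y0/(2 - c) := by
        rw [hZdef]
        simp only [mul_zero, Real.exp_zero, sub_self, mul_zero, add_zero]
        rw [inv_div]
      have hY0le : Y0 ≤ Z c 0 := by
        rw [hZ0, le_div_iff₀ (by linarith [hc.2])]
        nlinarith [hc.1, hY0]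
      exact ⟨lt_of_lt_of_le hy1Y hY0le, lt_of_lt_of_le hy2Y hY0le⟩
    · -- contact condition, index 1
      intro c hc s hs hsS heq hle
      refine ⟨_, _, hy₁d s hsS, hZd c hc s hs, ?_⟩
      have hzpos : 0 < Z c s := hZpos c hc s hs.le
      have hz2pos : 0 < (Z c s)^2 := pow_pos hzpos 2
      have h1 : m * Real.exp (-(P s)) * (y₂ s - y₁ s) ≤ 0 :=
        mul_nonpos_of_nonneg_of_nonpos (by positivity) (by rw [heq]; linarith)
      have hp := (hp1 s).1
      have key : B*δ*Real.exp (δ*s) * (Z c s)^2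
          < α * Real.exp (G s + P s / 2) * (Z c s)^2 := by
        apply mul_lt_mul_of_pos_right ?_ hz2pos
        have h3 : B*δ = α/(2*K) := by
          rw [hBdef]; field_simp
        have h2 : Real.exp (δ*s)/(2*K) < Real.exp (δ*s)/K := by
          apply div_lt_div_of_pos_left (Real.exp_pos _) hKpos (by linarith)
        calc B*δ*Real.exp (δ*s) = α * (Real.exp (δ*s)/(2*K)) := by rw [h3]; ring
          _ < α * (Real.exp (δ*s)/K) := by exact mul_lt_mul_of_pos_left h2 hα
          _ ≤ α * Real.exp (G s + P s/2) := mul_le_mul_of_nonneg_left hp hα.le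
      have hL' : -(B*(Real.exp (δ*s)*δ)) / ((2 - c)/(2*Y0) + B*(Real.exp (δ*s) - 1))^2
          = -(B*δ*Real.exp (δ*s) * (Z c s)^2) := by
        rw [div_eq_mul_inv, ← inv_pow]
        rw [hZdef]
        ring
      rw [hL']
      rw [← heq] at key ⊢
      linarith [key, h1]
    · -- contact condition, index 2
      intro c hc s hs hsS heq hle
      refine ⟨_, _, hy₂d s hsS, hZd c hc s hs, ?_⟩
      have hzpos : 0 < Z c s := hZpos c hc s hs.le
      have hz2pos : 0 < (Z c s)^2 := pow_pos hzpos 2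
      have h1 : m * Real.exp (P s) * (y₁ s - y₂ s) ≤ 0 :=
        mul_nonpos_of_nonneg_of_nonpos (by positivity) (by rw [heq]; linarith)
      have hp := (hp2 s).1
      have key : B*δ*Real.exp (δ*s) * (Z c s)^2
          < α * Real.exp (G s - P s / 2) * (Z c s)^2 := by
        apply mul_lt_mul_of_pos_right ?_ hz2pos
        have h3 : B*δ = α/(2*K) := by
          rw [hBdef]; field_simp
        have h2 : Real.exp (δ*s)/(2*K) < Real.exp (δ*s)/K := by
          apply div_lt_div_of_pos_left (Real.exp_pos _) hKpos (by linarith)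
        calc B*δ*Real.exp (δ*s) = α * (Real.exp (δ*s)/(2*K)) := by rw [h3]; ring
          _ < α * (Real.exp (δ*s)/K) := by exact mul_lt_mul_of_pos_left h2 hα
          _ ≤ α * Real.exp (G s - P s/2) := mul_le_mul_of_nonneg_left hp hα.le
      have hL' : -(B*(Real.exp (δ*s)*δ)) / ((2 - c)/(2*Y0) + B*(Real.exp (δ*s) - 1))^2
          = -(B*δ*Real.exp (δ*s) * (Z c s)^2) := by
        rw [div_eq_mul_inv, ← inv_pow]
        rw [hZdef]
        ring
      rw [hL']
      rw [← heq] at key ⊢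
      linarith [key, h1]
  -- lower comparison, via negation
  have hlower : ∀ c ∈ Ioo (0:ℝ) 1, ∀ t, 0 ≤ t → Wb c t < y₁ t ∧ Wb c t < y₂ t := by
    have h := engine (S := S) (y₁ := fun t => -(y₁ t)) (y₂ := fun t => -(y₂ t))
      (Z := fun c t => -(Wb c t)) hScount hy₁c.neg hy₂c.neg ?_ ?_ ?_ ?_ ?_
    · intro c hc t ht
      obtain ⟨h1, h2⟩ := h c hc t ht
      constructor <;> [skip; skip] <;> simp only [neg_lt_neg_iff] at h1 h2 <;>
        [exact h1; exact h2]
    · -- continuity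
      intro c hc
      apply ContinuousOn.neg
      rw [hWdef]
      apply ContinuousOn.inv₀
      · fun_prop
      · intro t ht; exact (hdW c hc t ht).ne'
    · -- monotone in c
      intro t ht a ha b hb hab
      simp only [neg_lt_neg_iff]
      simp only [hWdef]
      have hda := hdW a ha t ht
      have hden : (1 + a)/w0 + C2*(Real.exp (δ*t) - 1)
          < (1 + b)/w0 + C2*(Real.exp (δ*t) - 1) := by
        have h2 : (1 + a)/w0 < (1 + b)/w0 :=
          (div_lt_div_iff_of_pos_right hw0).mpr (by linarith)
        linarith
      exact inv_strictAnti₀ hda hden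
    · -- initial condition
      intro c hc
      have hW0 : Wb c 0 = w0/(1 + c) := by
        rw [hWdef]
        simp only [mul_zero, Real.exp_zero, sub_self, mul_zero, add_zero]
        rw [inv_div]
      have hlt : Wb c 0 < w0 := by
        rw [hW0]
        exact div_lt_self hw0 (by linarith [hc.1])
      constructor <;> simp only [neg_lt_neg_iff] <;> linarith [hw1, hw2]
    · -- contact condition, index 1
      intro c hc s hs hsS heqn hlen
      have heq : y₁ s = Wb c s := by
        have := neg_inj.mp heqn
        exact this
      have hle : Wb c s ≤ y₂ s := by
        simp only [neg_le_neg_iff] at hlen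
        exact hlen
      refine ⟨_, _, (hy₁d s hsS).neg, (hWd c hc s hs).neg, ?_⟩
      have hwposs : 0 < Wb c s := hWpos c hc s hs.le
      have hw2pos : 0 < (Wb c s)^2 := pow_pos hwposs 2
      have h1 : 0 ≤ m * Real.exp (-(P s)) * (y₂ s - y₁ s) :=
        mul_nonneg (by positivity) (by rw [heq]; linarith)
      have hpu := (hp1 s).2
      have key : α * Real.exp (G s + P s / 2) * (Wb c s)^2
          < C2*δ*Real.exp (δ*s) * (Wb c s)^2 := by
        apply mul_lt_mul_of_pos_right ?_ hw2pos
        have h3 : C2*δ = 2*K*α := by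
          rw [hC2def]; field_simp
        calc α * Real.exp (G s + P s/2) ≤ α * (K * Real.exp (δ*s)) :=
              mul_le_mul_of_nonneg_left hpu hα.le
          _ < 2*K*α * Real.exp (δ*s) := by nlinarith [mul_pos (mul_pos hKpos hα) (Real.exp_pos (δ*s))]
          _ = C2*δ*Real.exp (δ*s) := by rw [h3]
      have hL' : -(C2*(Real.exp (δ*s)*δ)) / ((1 + c)/w0 + C2*(Real.exp (δ*s) - 1))^2
          = -(C2*δ*Real.exp (δ*s) * (Wb c s)^2) := by
        rw [div_eq_mul_inv, ← inv_pow]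
        rw [hWdef]
        ring
      rw [hL']
      rw [← heq] at key ⊢
      linarith [key, h1]
    · -- contact condition, index 2
      intro c hc s hs hsS heqn hlen
      have heq : y₂ s = Wb c s := neg_inj.mp heqn
      have hle : Wb c s ≤ y₁ s := by
        simp only [neg_le_neg_iff] at hlen
        exact hlen
      refine ⟨_, _, (hy₂d s hsS).neg, (hWd c hc s hs).neg, ?_⟩
      have hwposs : 0 < Wb c s := hWpos c hc s hs.le
      have hw2pos : 0 < (Wb c s)^2 := pow_pos hwposs 2
      have h1 : 0 ≤ m * Real.exp (P s) * (y₁ s - y₂ s) :=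
        mul_nonneg (by positivity) (by rw [heq]; linarith)
      have hpu := (hp2 s).2
      have key : α * Real.exp (G s - P s / 2) * (Wb c s)^2
          < C2*δ*Real.exp (δ*s) * (Wb c s)^2 := by
        apply mul_lt_mul_of_pos_right ?_ hw2pos
        have h3 : C2*δ = 2*K*α := by
          rw [hC2def]; field_simp
        calc α * Real.exp (G s - P s/2) ≤ α * (K * Real.exp (δ*s)) :=
              mul_le_mul_of_nonneg_left hpu hα.le
          _ < 2*K*α * Real.exp (δ*s) := by nlinarith [mul_pos (mul_pos hKpos hα) (Real.exp_pos (δ*s))]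
          _ = C2*δ*Real.exp (δ*s) := by rw [h3]
      have hL' : -(C2*(Real.exp (δ*s)*δ)) / ((1 + c)/w0 + C2*(Real.exp (δ*s) - 1))^2
          = -(C2*δ*Real.exp (δ*s) * (Wb c s)^2) := by
        rw [div_eq_mul_inv, ← inv_pow]
        rw [hWdef]
        ring
      rw [hL']
      rw [← heq] at key ⊢
      linarith [key, h1]
  -- final assembly
  set τ : ℝ := (1 + (1/2:ℝ))/w0 with hτdef
  have hτ : 0 < τ := by rw [hτdef]; positivity
  refine ⟨(1/δ) * Real.log (2 + τ/C2), ?_⟩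
  intro t ht
  have hτC : 0 < τ/C2 := div_pos hτ hC2
  have hlogpos : 0 < Real.log (2 + τ/C2) := Real.log_pos (by linarith)
  have ht0 : 0 ≤ t := le_trans (by positivity) ht
  have hEt : 2 + τ/C2 ≤ Real.exp (δ*t) := by
    have h1 : Real.exp (δ * ((1/δ) * Real.log (2 + τ/C2))) = 2 + τ/C2 := by
      rw [show δ * ((1/δ) * Real.log (2 + τ/C2)) = Real.log (2 + τ/C2) by field_simp]
      exact Real.exp_log (by linarith)
    rw [← h1]
    exact Real.exp_le_exp.mpr (mul_le_mul_of_nonneg_left ht hδ.le)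
  have hE2 : (2:ℝ) ≤ Real.exp (δ*t) := by linarith
  have hc12 : (1/2:ℝ) ∈ Ioo (0:ℝ) 1 := by norm_num
  obtain ⟨hZ1, hZ2⟩ := hupper (1/2) hc12 t ht0
  obtain ⟨hW1, hW2⟩ := hlower (1/2) hc12 t ht0
  have hWtpos : 0 < Wb (1/2) t := hWpos (1/2) hc12 t ht0
  have hy1pos : 0 < y₁ t := lt_trans hWtpos hW1
  have hy2pos : 0 < y₂ t := lt_trans hWtpos hW2
  have hZtpos : 0 < Z (1/2) t := hZpos (1/2) hc12 t ht0
  -- reconstruct x from y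
  have hx1 : x₁ t = y₁ t * Real.exp (G t + P t / 2) := by
    rw [hy₁def]
    rw [mul_assoc, ← Real.exp_add]
    rw [show -(G t + P t / 2) + (G t + P t / 2) = 0 by ring, Real.exp_zero, mul_one]
  have hx2 : x₂ t = y₂ t * Real.exp (G t - P t / 2) := by
    rw [hy₂def]
    rw [mul_assoc, ← Real.exp_add]
    rw [show -(G t - P t / 2) + (G t - P t / 2) = 0 by ring, Real.exp_zero, mul_one]
  -- barrier estimates at time t
  have hZub : Z (1/2) t ≤ 2/(B*Real.exp (δ*t)) := by
    rw [hZdef]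
    have hd1 : B*Real.exp (δ*t)/2 ≤ (2 - 1/2)/(2*Y0) + B*(Real.exp (δ*t) - 1) := by
      have h0 : (0:ℝ) ≤ (2 - 1/2)/(2*Y0) := by positivity
      have h1 : Real.exp (δ*t)/2 ≤ Real.exp (δ*t) - 1 := by linarith
      have h2 : B*(Real.exp (δ*t)/2) ≤ B*(Real.exp (δ*t) - 1) :=
        mul_le_mul_of_nonneg_left h1 hB.le
      linarith
    have hd2 : (0:ℝ) < B*Real.exp (δ*t)/2 := by positivity
    calc ((2 - 1/2)/(2*Y0) + B*(Real.exp (δ*t) - 1))⁻¹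
        ≤ (B*Real.exp (δ*t)/2)⁻¹ := inv_anti₀ hd2 hd1
      _ = 2/(B*Real.exp (δ*t)) := by rw [inv_div]
  have hWlb : (2*C2*Real.exp (δ*t))⁻¹ ≤ Wb (1/2) t := by
    rw [hWdef]
    have hCe : C2*(2 + τ/C2) ≤ C2*Real.exp (δ*t) := mul_le_mul_of_nonneg_left hEt hC2.le
    have hCe2 : C2*(2 + τ/C2) = 2*C2 + τ := by field_simp
    have hd1 : (1 + 1/2)/w0 + C2*(Real.exp (δ*t) - 1) ≤ 2*C2*Real.exp (δ*t) := by
      have hττ : (1 + (1/2:ℝ))/w0 = τ := by rw [hτdef]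
      rw [hττ]
      linarith [hCe, hCe2, hC2]
    have hd0 : 0 < (1 + (1/2:ℝ))/w0 + C2*(Real.exp (δ*t) - 1) := hdW (1/2) hc12 t ht0
    exact inv_anti₀ hd0 hd1
  -- the numeric identities
  have hidA : (2*C2*Real.exp (δ*t))⁻¹ * (Real.exp (δ*t)/K) = δ/(4*K^2*α) := by
    rw [hC2def]
    field_simp
    ring
  have hidB : (2/(B*Real.exp (δ*t))) * (K*Real.exp (δ*t)) = 4*K^2*δ/α := by
    rw [hBdef]
    field_simp
    ring
  -- bounds for x₁
  have hb1l : δ/(4*K^2*α) ≤ x₁ t := by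
    rw [hx1, ← hidA]
    have h1 : Wb (1/2) t * (Real.exp (δ*t)/K) ≤ y₁ t * Real.exp (G t + P t/2) :=
      mul_le_mul hW1.le (hp1 t).1 (by positivity) hy1pos.le
    have h2 : (2*C2*Real.exp (δ*t))⁻¹ * (Real.exp (δ*t)/K)
        ≤ Wb (1/2) t * (Real.exp (δ*t)/K) :=
      mul_le_mul_of_nonneg_right hWlb (by positivity)
    linarith
  have hb1u : x₁ t ≤ 4*K^2*δ/α := by
    rw [hx1, ← hidB]
    have h1 : y₁ t * Real.exp (G t + P t/2) ≤ Z (1/2) t * (K*Real.exp (δ*t)) :=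
      mul_le_mul hZ1.le (hp1 t).2 (Real.exp_pos _).le hZtpos.le
    have h2 : Z (1/2) t * (K*Real.exp (δ*t)) ≤ (2/(B*Real.exp (δ*t))) * (K*Real.exp (δ*t)) :=
      mul_le_mul_of_nonneg_right hZub (by positivity)
    linarith
  -- bounds for x₂
  have hb2l : δ/(4*K^2*α) ≤ x₂ t := by
    rw [hx2, ← hidA]
    have h1 : Wb (1/2) t * (Real.exp (δ*t)/K) ≤ y₂ t * Real.exp (G t - P t/2) :=
      mul_le_mul hW2.le (hp2 t).1 (by positivity) hy2pos.le
    have h2 : (2*C2*Real.exp (δ*t))⁻¹ * (Real.exp (δ*t)/K)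
        ≤ Wb (1/2) t * (Real.exp (δ*t)/K) :=
      mul_le_mul_of_nonneg_right hWlb (by positivity)
    linarith
  have hb2u : x₂ t ≤ 4*K^2*δ/α := by
    rw [hx2, ← hidB]
    have h1 : y₂ t * Real.exp (G t - P t/2) ≤ Z (1/2) t * (K*Real.exp (δ*t)) :=
      mul_le_mul hZ2.le (hp2 t).2 (Real.exp_pos _).le hZtpos.le
    have h2 : Z (1/2) t * (K*Real.exp (δ*t)) ≤ (2/(B*Real.exp (δ*t))) * (K*Real.exp (δ*t)) :=
      mul_le_mul_of_nonneg_right hZub (by positivity)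
    linarith
  exact ⟨⟨hb1l, hb1u⟩, ⟨hb2l, hb2u⟩⟩
end

section
/- Let 0 < ε ≤ 1, m > 0, T > 0, and suppose Δ(ε,m,T) > 0. Then for every a > 0 there exists θ > 0 such that for all V₀ ∈ [V_m^−, V_m^+], all U₀ ∈ ℝ and all t₀ ∈ ℝ, the solution (U, V) of the switched system S(ε,m,T) — namely dU/dt = 2(m·cosh(V) − m − ε), dV/dt = 2(u(t) − m·sinh(V)) — with initial condition (U(t₀), V(t₀)) = (U₀, V₀) satisfies U(t₀ + θ) ≥ U₀ + a. -/
open Real Filter Set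

/-- A solution of the planar switched system `S(ε,m,T)` in the variables `(U,V)`. -/
def IsSolS (ε m T : ℝ) (U V : ℝ → ℝ) : Prop :=
  Continuous U ∧ Continuous V ∧ ∀ t : ℝ, (∀ n : ℤ, t ≠ n * T) →
    HasDerivAt U (2 * (m * Real.cosh (V t) - m - ε)) t ∧
    HasDerivAt V (2 * (squareWave T t - m * Real.sinh (V t))) t

open Topology in
/-- Local version of `hasDerivAt_of_hasDerivAt_of_ne`. -/
lemma hasDerivAt_of_ne_ball {f g : ℝ → ℝ} {x δ : ℝ} (hδ : 0 < δ)
    (hd : ∀ y, y ≠ x → |y - x| < δ → HasDerivAt f (g y) y)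
    (hf : ContinuousAt f x) (hg : ContinuousAt g x) : HasDerivAt f (g x) x := by
  have hIoo1 : Ioo x (x + δ) ∈ 𝓝[>] x := Ioo_mem_nhdsGT (by linarith)
  have hIoo2 : Ioo (x - δ) x ∈ 𝓝[<] x := Ioo_mem_nhdsLT (by linarith)
  have hd1 : ∀ y ∈ Ioo x (x + δ), HasDerivAt f (g y) y := by
    intro y hy
    exact hd y (ne_of_gt hy.1)
      (by rw [abs_sub_lt_iff]; constructor <;> [linarith [hy.2]; linarith [hy.1]])
  have hd2 : ∀ y ∈ Ioo (x - δ) x, HasDerivAt f (g y) y := by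
    intro y hy
    exact hd y (ne_of_lt hy.2)
      (by rw [abs_sub_lt_iff]; constructor <;> [linarith [hy.2]; linarith [hy.1]])
  have A : HasDerivWithinAt f (g x) (Ici x) x := by
    apply hasDerivWithinAt_Ici_of_tendsto_deriv
      (fun y hy => (hd1 y hy).differentiableAt.differentiableWithinAt)
      hf.continuousWithinAt hIoo1
    apply (hg.tendsto.mono_left nhdsWithin_le_nhds).congr'
    exact mem_of_superset hIoo1 fun y hy => ((hd1 y hy).deriv).symm
  have B : HasDerivWithinAt f (g x) (Iic x) x := by
    apply hasDerivWithinAt_Iic_of_tendsto_deriv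
      (fun y hy => (hd2 y hy).differentiableAt.differentiableWithinAt)
      hf.continuousWithinAt hIoo2
    apply (hg.tendsto.mono_left nhdsWithin_le_nhds).congr'
    exact mem_of_superset hIoo2 fun y hy => ((hd2 y hy).deriv).symm
  simpa using B.union A

/-- A continuous function with continuous candidate derivative, differentiable away from
the lattice `ℤ • T`, is differentiable everywhere. -/
lemma hasDerivAt_everywhere {T : ℝ} (hT : 0 < T) {f g : ℝ → ℝ}
    (hf : Continuous f) (hg : Continuous g)
    (hd : ∀ t : ℝ, (∀ n : ℤ, t ≠ n * T) → HasDerivAt f (g t) t) :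
    ∀ t, HasDerivAt f (g t) t := by
  intro x
  by_cases hx : ∀ n : ℤ, x ≠ n * T
  · exact hd x hx
  · push_neg at hx
    obtain ⟨n, rfl⟩ := hx
    apply hasDerivAt_of_ne_ball hT _ hf.continuousAt hg.continuousAt
    intro y hy hyd
    apply hd
    intro j hj
    apply hy
    subst hj
    have h2 : |(j : ℝ) - n| < 1 := by
      rw [show (j:ℝ)*T - n*T = ((j:ℝ) - n)*T by ring, abs_mul, abs_of_pos hT] at hyd
      nlinarith [abs_nonneg ((j:ℝ) - n)]
    rw [show (j:ℝ) - n = ((j - n : ℤ) : ℝ) by push_cast; ring] at h2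
    have h4 : |j - n| < 1 := by exact_mod_cast h2
    rw [abs_lt] at h4
    have : j = n := by omega
    rw [this]

lemma sinh_expansive (a b : ℝ) : (a - b)^2 ≤ (Real.sinh a - Real.sinh b) * (a - b) := by
  have key : ∀ p q : ℝ, q ≤ p → p - q ≤ Real.sinh p - Real.sinh q := by
    intro p q hpq
    have hmono : Monotone (fun x => Real.sinh x - x) := by
      apply monotone_of_deriv_nonneg
        (fun x => ((Real.hasDerivAt_sinh x).sub (hasDerivAt_id x)).differentiableAt)
      intro x
      rw [((Real.hasDerivAt_sinh x).sub (hasDerivAt_id x)).deriv]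
      linarith [Real.one_le_cosh x]
    have := hmono hpq
    simp only at this
    linarith
  rcases le_total b a with h | h
  · nlinarith [key a b h]
  · nlinarith [key b a h]

lemma cosh_lipschitz {M : ℝ} (a b : ℝ) (ha : |a| ≤ M) (hb : |b| ≤ M) :
    |Real.cosh a - Real.cosh b| ≤ Real.cosh M * |a - b| := by
  have hs : Convex ℝ (Icc (-M) M) := convex_Icc _ _
  have hd : ∀ x ∈ Icc (-M) M, HasDerivWithinAt Real.cosh (Real.sinh x) (Icc (-M) M) x :=
    fun x _ => (Real.hasDerivAt_cosh x).hasDerivWithinAt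
  have hbound : ∀ x ∈ Icc (-M) M, ‖Real.sinh x‖ ≤ Real.cosh M := by
    intro x hx
    rw [Real.norm_eq_abs, Real.abs_sinh]
    calc Real.sinh |x| ≤ Real.sinh M := Real.sinh_le_sinh.2 (abs_le.2 ⟨hx.1, hx.2⟩)
    _ ≤ Real.cosh M := (Real.sinh_lt_cosh M).le
  have := hs.norm_image_sub_le_of_norm_hasDerivWithin_le hd hbound
    (Set.mem_Icc.2 (abs_le.1 hb)) (Set.mem_Icc.2 (abs_le.1 ha))
  simpa [Real.norm_eq_abs] using this

set_option maxHeartbeats 1000000 in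
theorem statement18 (ε m T : ℝ) (hε : 0 < ε) (hε1 : ε ≤ 1) (hm : 0 < m) (hT : 0 < T)
    (P : ℝ → ℝ) (hP : IsSolF m T P) (hPper : Function.Periodic P (2 * T))
    (hΔ : 0 < DeltaP ε m T P) :
    ∀ a : ℝ, 0 < a → ∃ θ : ℝ, 0 < θ ∧
      ∀ V₀ ∈ Set.Icc (-Real.arsinh (1 / m)) (Real.arsinh (1 / m)),
        ∀ U₀ t₀ : ℝ, ∀ U V : ℝ → ℝ, IsSolS ε m T U V →
          U t₀ = U₀ → V t₀ = V₀ → U₀ + a ≤ U (t₀ + θ) := by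
  intro a ha
  obtain ⟨hPc, hPd⟩ := hP
  have hT2 : (0:ℝ) < 2 * T := by linarith
  set A : ℝ := Real.arsinh (1 / m) with hAdef
  have hA : 0 ≤ A := Real.arsinh_nonneg_iff.2 (by positivity)
  -- bound on P
  obtain ⟨Mp, hMp0⟩ : ∃ Mp : ℝ, ∀ t, |P t| ≤ Mp := by
    obtain ⟨C, hC⟩ := (isCompact_Icc : IsCompact (Icc (0:ℝ) (2*T))).exists_bound_of_continuousOn
      hPc.continuousOn
    refine ⟨C, fun t => ?_⟩
    obtain ⟨y, hy, hty⟩ := hPper.exists_mem_Ico₀ hT2 t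
    rw [hty]
    simpa using hC y ⟨hy.1, hy.2.le⟩
  have hMp : 0 ≤ Mp := le_trans (abs_nonneg _) (hMp0 0)
  set C₀ : ℝ := A + Mp with hC₀def
  have hC₀ : 0 ≤ C₀ := by positivity
  set M : ℝ := Mp + C₀ with hMdef
  set B : ℝ := Real.cosh M * C₀ with hBdef
  have hB0 : 0 ≤ B := mul_nonneg (Real.cosh_pos M).le hC₀
  set I : ℝ := ∫ s in (0:ℝ)..(2*T), 2 * (m * Real.cosh (P s) - m - ε) with hIdef
  have hI0 : 0 < I := by
    unfold DeltaP at hΔ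
    rw [← hIdef] at hΔ
    nlinarith [one_div_pos.2 hT2]
  -- choice of θ
  set k : ℕ := max 1 ⌈(a + B)/I⌉₊ with hkdef
  have hk1 : (1:ℝ) ≤ (k:ℝ) := by exact_mod_cast le_max_left 1 ⌈(a + B)/I⌉₊
  have hkI : a + B ≤ (k:ℝ) * I := by
    have h1 : (a + B)/I ≤ (k:ℝ) := by
      refine le_trans (Nat.le_ceil _) ?_
      exact_mod_cast le_max_right 1 ⌈(a + B)/I⌉₊
    have := mul_le_mul_of_nonneg_right h1 hI0.le
    rwa [div_mul_cancel₀ _ hI0.ne'] at this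
  refine ⟨(k:ℝ) * (2*T), by nlinarith, ?_⟩
  intro V₀ hV₀ U₀ t₀ U V hUV hU0 hV0
  set θ : ℝ := (k:ℝ) * (2*T) with hθdef
  have hθ0 : 0 < θ := by nlinarith
  obtain ⟨hUc, hVc, hODE⟩ := hUV
  -- U differentiable everywhere
  have hvCont : Continuous (fun t => 2 * (m * Real.cosh (V t) - m - ε)) := by
    exact continuous_const.mul (((continuous_const.mul (Real.continuous_cosh.comp hVc)).sub
      continuous_const).sub continuous_const)
  have hpCont : Continuous (fun t => 2 * (m * Real.cosh (P t) - m - ε)) := by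
    exact continuous_const.mul (((continuous_const.mul (Real.continuous_cosh.comp hPc)).sub
      continuous_const).sub continuous_const)
  have hU' : ∀ t, HasDerivAt U (2 * (m * Real.cosh (V t) - m - ε)) t :=
    hasDerivAt_everywhere hT hUc hvCont (fun t ht => (hODE t ht).1)
  -- the Lyapunov function
  set w : ℝ → ℝ := fun t => V t - P t with hwdef
  have hwc : Continuous w := hVc.sub hPc
  set G : ℝ → ℝ := fun t => (w t)^2 * Real.exp (4*m*t) with hGdef
  set D : ℝ → ℝ := fun t =>
    (4*m*(w t)^2 - 4*m*((Real.sinh (V t) - Real.sinh (P t)) * (w t))) * Real.exp (4*m*t)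
    with hDdef
  have hGc : Continuous G := (hwc.pow 2).mul (Real.continuous_exp.comp (continuous_const.mul
    continuous_id))
  have hDc : Continuous D := by
    apply Continuous.mul
    · exact (continuous_const.mul (hwc.pow 2)).sub (continuous_const.mul
        (((Real.continuous_sinh.comp hVc).sub (Real.continuous_sinh.comp hPc)).mul hwc))
    · exact Real.continuous_exp.comp (continuous_const.mul continuous_id)
  have hG' : ∀ t, HasDerivAt G (D t) t := by
    apply hasDerivAt_everywhere hT hGc hDc
    intro t ht
    have h1 := (hODE t ht).2
    have h2 := hPd t ht
    have h3 : HasDerivAt w (-(2*m) * (Real.sinh (V t) - Real.sinh (P t))) t := by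
      have := h1.sub h2
      exact this.congr_deriv (by ring)
    have h4 : HasDerivAt (fun t => (w t)^2)
        (2 * (w t) * (-(2*m) * (Real.sinh (V t) - Real.sinh (P t)))) t := by
      have := h3.pow 2
      exact this.congr_deriv (by ring)
    have h5 : HasDerivAt (fun t : ℝ => Real.exp (4*m*t)) (Real.exp (4*m*t) * (4*m)) t := by
      have h0 : HasDerivAt (fun t : ℝ => 4*m*t) (4*m) t := by
        simpa using (hasDerivAt_id t).const_mul (4*m)
      exact h0.exp
    have := h4.mul h5
    exact this.congr_deriv (by simp only [hDdef]; ring)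
  have hD0 : ∀ t, D t ≤ 0 := by
    intro t
    have h := sinh_expansive (V t) (P t)
    have hfac : 4*m*(w t)^2 - 4*m*((Real.sinh (V t) - Real.sinh (P t)) * (w t)) ≤ 0 := by
      have hw' : w t = V t - P t := rfl
      rw [hw']
      nlinarith
    exact mul_nonpos_of_nonpos_of_nonneg hfac (Real.exp_pos _).le
  have hGanti : Antitone G :=
    antitone_of_deriv_nonpos (fun t => (hG' t).differentiableAt)
      (fun t => by rw [(hG' t).deriv]; exact hD0 t)
  have hwt₀ : |w t₀| ≤ C₀ := by
    have h1 : |V t₀| ≤ A := by rw [hV0]; exact abs_le.2 ⟨hV₀.1, hV₀.2⟩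
    have h2 := hMp0 t₀
    calc |w t₀| = |V t₀ + -(P t₀)| := by rw [hwdef]; ring_nf
    _ ≤ |V t₀| + |-(P t₀)| := abs_add_le _ _
    _ ≤ A + Mp := by rw [abs_neg]; exact add_le_add h1 h2
  -- decay estimate
  have hdecay : ∀ t, t₀ ≤ t → |w t| ≤ C₀ * Real.exp (-(2*m) * (t - t₀)) := by
    intro t ht
    have h1 : G t ≤ G t₀ := hGanti ht
    have e1 : (w t₀)^2 ≤ C₀^2 := by nlinarith [abs_le.1 hwt₀]
    have e2 : Real.exp (-(4*m) * (t - t₀)) * Real.exp (4*m*t) = Real.exp (4*m*t₀) := by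
      rw [← Real.exp_add]; ring_nf
    have h2 : (w t)^2 ≤ C₀^2 * Real.exp (-(4*m) * (t - t₀)) := by
      have h3 : (w t)^2 * Real.exp (4*m*t) ≤
          (C₀^2 * Real.exp (-(4*m) * (t - t₀))) * Real.exp (4*m*t) := by
        calc (w t)^2 * Real.exp (4*m*t) = G t := rfl
        _ ≤ G t₀ := h1
        _ = (w t₀)^2 * Real.exp (4*m*t₀) := rfl
        _ ≤ C₀^2 * Real.exp (4*m*t₀) := mul_le_mul_of_nonneg_right e1 (Real.exp_pos _).le
        _ = (C₀^2 * Real.exp (-(4*m) * (t - t₀))) * Real.exp (4*m*t) := by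
            rw [show (C₀^2 * Real.exp (-(4*m) * (t - t₀))) * Real.exp (4*m*t)
              = C₀^2 * (Real.exp (-(4*m) * (t - t₀)) * Real.exp (4*m*t)) by ring, e2]
      exact le_of_mul_le_mul_right h3 (Real.exp_pos _)
    have hR : 0 ≤ C₀ * Real.exp (-(2*m) * (t - t₀)) := by positivity
    have hR2 : (C₀ * Real.exp (-(2*m) * (t - t₀)))^2 = C₀^2 * Real.exp (-(4*m) * (t - t₀)) := by
      have he : Real.exp (-(2*m) * (t - t₀)) ^ 2 = Real.exp (-(4*m) * (t - t₀)) := by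
        rw [sq, ← Real.exp_add]
        try ring_nf
      rw [mul_pow, he]
    exact abs_le.2 (abs_le_of_sq_le_sq' (by rw [hR2]; exact h2) hR)
  have hVbound : ∀ t, t₀ ≤ t → |V t| ≤ M := by
    intro t ht
    have h1 := hdecay t ht
    have h2 : Real.exp (-(2*m) * (t - t₀)) ≤ 1 := by
      rw [← Real.exp_zero]
      apply Real.exp_le_exp.2
      nlinarith
    have h3 : |w t| ≤ C₀ := le_trans h1 (by nlinarith)
    calc |V t| = |w t + P t| := by rw [hwdef]; ring_nf
    _ ≤ |w t| + |P t| := abs_add_le _ _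
    _ ≤ C₀ + Mp := add_le_add h3 (hMp0 t)
    _ = M := by rw [hMdef]; ring
  -- FTC for U
  have hFTC : ∫ t in t₀..(t₀ + θ), 2 * (m * Real.cosh (V t) - m - ε) = U (t₀ + θ) - U t₀ :=
    intervalIntegral.integral_eq_sub_of_hasDerivAt (fun x _ => hU' x)
      (hvCont.intervalIntegrable _ _)
  -- periodic integral
  have hper : Function.Periodic (fun s => 2 * (m * Real.cosh (P s) - m - ε)) (2*T) := by
    intro s
    simp only [hPper s]
  have hsum : ∀ j : ℕ, ∫ t in t₀..(t₀ + (j:ℝ) * (2*T)), 2 * (m * Real.cosh (P t) - m - ε)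
      = (j:ℝ) * I := by
    intro j
    induction j with
    | zero => simp
    | succ n ih =>
      have split : ∫ t in t₀..(t₀ + ((n:ℝ)+1) * (2*T)), 2 * (m * Real.cosh (P t) - m - ε)
          = (∫ t in t₀..(t₀ + (n:ℝ) * (2*T)), 2 * (m * Real.cosh (P t) - m - ε))
          + ∫ t in (t₀ + (n:ℝ) * (2*T))..(t₀ + ((n:ℝ)+1) * (2*T)),
              2 * (m * Real.cosh (P t) - m - ε) :=
        (intervalIntegral.integral_add_adjacent_intervals
          (hpCont.intervalIntegrable _ _) (hpCont.intervalIntegrable _ _)).symm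
      have per : ∫ t in (t₀ + (n:ℝ) * (2*T))..(t₀ + ((n:ℝ)+1) * (2*T)),
          2 * (m * Real.cosh (P t) - m - ε) = I := by
        have h := hper.intervalIntegral_add_eq (t₀ + (n:ℝ) * (2*T)) 0
        rw [show t₀ + ((n:ℝ)+1) * (2*T) = (t₀ + (n:ℝ) * (2*T)) + 2*T by ring, h, zero_add]
      rw [show ((n:ℕ)+1 : ℕ) = n + 1 from rfl]
      push_cast
      rw [split, ih, per]
      ring
  -- error integral
  have hprim : ∀ s : ℝ, HasDerivAt (fun s => B * Real.exp (-(2*m) * (s - t₀)))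
      (-(2*m*B*Real.exp (-(2*m) * (s - t₀)))) s := by
    intro s
    have h0 : HasDerivAt (fun s : ℝ => -(2*m) * (s - t₀)) (-(2*m)) s := by
      simpa using ((hasDerivAt_id s).sub_const t₀).const_mul (-(2*m))
    have := (h0.exp).const_mul B
    exact this.congr_deriv (by ring)
  have hφint : ∫ t in t₀..(t₀ + θ), -(2*m*B*Real.exp (-(2*m) * (t - t₀)))
      = B * Real.exp (-(2*m) * θ) - B := by
    rw [intervalIntegral.integral_eq_sub_of_hasDerivAt (fun x _ => hprim x)]
    · simp
    · apply Continuous.intervalIntegrable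
      exact (continuous_const.mul (Real.continuous_exp.comp
        (continuous_const.mul (continuous_id.sub continuous_const)))).neg
  have hpoint : ∀ t ∈ Icc t₀ (t₀ + θ), -(2*m*B*Real.exp (-(2*m) * (t - t₀)))
      ≤ 2 * (m * Real.cosh (V t) - m - ε) - 2 * (m * Real.cosh (P t) - m - ε) := by
    intro t ht
    have h1 : |2 * (m * Real.cosh (V t) - m - ε) - 2 * (m * Real.cosh (P t) - m - ε)|
        ≤ 2*m*B*Real.exp (-(2*m) * (t - t₀)) := by
      have e1 : 2 * (m * Real.cosh (V t) - m - ε) - 2 * (m * Real.cosh (P t) - m - ε)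
          = 2*m * (Real.cosh (V t) - Real.cosh (P t)) := by ring
      rw [e1, abs_mul, abs_of_pos (by linarith : (0:ℝ) < 2*m)]
      have h2 : |Real.cosh (V t) - Real.cosh (P t)| ≤ Real.cosh M * |w t| :=
        cosh_lipschitz _ _ (hVbound t ht.1)
          (le_trans (hMp0 t) (by rw [hMdef]; linarith))
      have h3 := hdecay t ht.1
      have hcM := (Real.cosh_pos M).le
      rw [hBdef]
      nlinarith [mul_le_mul_of_nonneg_left h2 (by linarith : (0:ℝ) ≤ 2*m),
        mul_le_mul_of_nonneg_left h3 (mul_nonneg (by linarith : (0:ℝ) ≤ 2*m) hcM)]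
    linarith [(abs_le.1 h1).1]
  have herr : B * Real.exp (-(2*m) * θ) - B ≤
      ∫ t in t₀..(t₀ + θ), (2 * (m * Real.cosh (V t) - m - ε)
        - 2 * (m * Real.cosh (P t) - m - ε)) := by
    rw [← hφint]
    apply intervalIntegral.integral_mono_on (by linarith)
    · apply Continuous.intervalIntegrable
      exact (continuous_const.mul (Real.continuous_exp.comp
        (continuous_const.mul (continuous_id.sub continuous_const)))).neg
    · exact (hvCont.sub hpCont).intervalIntegrable _ _
    · exact hpoint
  -- assembly
  have hsplit : ∫ t in t₀..(t₀ + θ), 2 * (m * Real.cosh (V t) - m - ε)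
      = (∫ t in t₀..(t₀ + θ), 2 * (m * Real.cosh (P t) - m - ε))
      + ∫ t in t₀..(t₀ + θ), (2 * (m * Real.cosh (V t) - m - ε)
          - 2 * (m * Real.cosh (P t) - m - ε)) := by
    rw [intervalIntegral.integral_sub (hvCont.intervalIntegrable _ _)
      (hpCont.intervalIntegrable _ _)]
    ring
  have hmain := hsum k
  have hexp0 : 0 ≤ B * Real.exp (-(2*m) * θ) := by positivity
  have : U (t₀ + θ) - U t₀ ≥ (k:ℝ) * I + (B * Real.exp (-(2*m) * θ) - B) := by
    rw [← hFTC, hsplit, ← hθdef] at *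
    rw [hmain]
    linarith [herr]
  rw [hU0] at this
  linarith
end

section
/- Let m > 0, T > 0, S > 0 and set k = ⌊S/T⌋ + 1. There exists a constant C(S,m,T) such that for all sufficiently small η > 0 the following holds. Let u : [0,S] → {−1,+1} be the restriction of the 2T-periodic square wave (u = +1 on [0,T), u = −1 on [T,2T)), and let ũ : [0,S] → {−1,+1} be any piecewise constant signal starting at ũ(0) = +1 whose j-th switching time t̃_j satisfies |t̃_j − jT| ≤ jη for every j with jT ≤ S + T. If V and Ṽ solve respectively dV/dt = 2(u(t) − m·sinh(V)) and dṼ/dt = 2(ũ(t) − m·sinh(Ṽ)) on [0,S] with the same initial condition V(0) = Ṽ(0) ∈ [V_m^−, V_m^+], then ∫₀^S |ũ(t) − u(t)| dt ≤ 2k²η and sup_{t ∈ [0,S]} |Ṽ(t) − V(t)| ≤ C(S,m,T)·η. -/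
open Real Filter Set

lemma squareWave_eq {T : ℝ} (hT : 0 < T) (j : ℕ) {t : ℝ}
    (h1 : (j : ℝ) * T ≤ t) (h2 : t < ((j : ℝ) + 1) * T) :
    squareWave T t = (-1 : ℝ) ^ j := by
  have h2T : (0:ℝ) < 2 * T := by linarith
  rcases Nat.even_or_odd j with ⟨l, hl⟩ | ⟨l, hl⟩
  · subst hl
    have hj : ((l + l : ℕ) : ℝ) = 2 * (l:ℝ) := by push_cast; ring
    rw [hj] at h1 h2
    have hfl : ⌊t / (2 * T)⌋ = (l : ℤ) := by
      rw [Int.floor_eq_iff]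
      constructor
      · rw [le_div_iff₀ h2T]; push_cast; nlinarith
      · rw [div_lt_iff₀ h2T]; push_cast; nlinarith
    have : Int.fract (t / (2 * T)) < 1 / 2 := by
      rw [Int.fract, hfl, sub_lt_iff_lt_add, div_lt_iff₀ h2T]
      push_cast; nlinarith
    simp only [squareWave, if_pos this]
    rw [show l + l = 2 * l by ring, pow_mul]
    norm_num
  · subst hl
    have hj : ((2 * l + 1 : ℕ) : ℝ) = 2 * (l:ℝ) + 1 := by push_cast; ring
    rw [hj] at h1 h2
    have hfl : ⌊t / (2 * T)⌋ = (l : ℤ) := by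
      rw [Int.floor_eq_iff]
      constructor
      · rw [le_div_iff₀ h2T]; push_cast; nlinarith
      · rw [div_lt_iff₀ h2T]; push_cast; nlinarith
    have : ¬ Int.fract (t / (2 * T)) < 1 / 2 := by
      rw [Int.fract, hfl, not_lt, le_sub_iff_add_le, le_div_iff₀ h2T]
      push_cast; nlinarith
    simp only [squareWave, if_neg this]
    rw [pow_add, pow_mul]
    norm_num

lemma squareWave_abs (T t : ℝ) : |squareWave T t| = 1 := by
  unfold squareWave; split <;> simp

lemma squareWave_measurable (T : ℝ) : Measurable (squareWave T) := by
  unfold squareWave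
  exact Measurable.ite
    (measurableSet_lt (measurable_fract.comp (measurable_id.div_const _)) measurable_const)
    measurable_const measurable_const

set_option maxHeartbeats 4000000 in
theorem statement19 (m T S : ℝ) (hm : 0 < m) (hT : 0 < T) (hS : 0 < S) :
    ∃ C : ℝ, ∃ η₀ : ℝ, 0 < η₀ ∧ ∀ η : ℝ, 0 < η → η ≤ η₀ →
      ∀ (ut : ℝ → ℝ) (ts : ℕ → ℝ),
        ts 0 = 0 → StrictMono ts →
        (∀ j : ℕ, ∀ t ∈ Set.Ico (ts j) (ts (j + 1)), ut t = (-1 : ℝ) ^ j) →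
        (∀ j : ℕ, (j : ℝ) * T ≤ S + T → |ts j - (j : ℝ) * T| ≤ (j : ℝ) * η) →
        ∀ V Vt : ℝ → ℝ,
          ContinuousOn V (Set.Icc 0 S) → ContinuousOn Vt (Set.Icc 0 S) →
          (∀ t ∈ Set.Ioo (0:ℝ) S, (∀ n : ℤ, t ≠ n * T) →
            HasDerivAt V (2 * (squareWave T t - m * Real.sinh (V t))) t) →
          (∀ t ∈ Set.Ioo (0:ℝ) S, (∀ j : ℕ, t ≠ ts j) →
            HasDerivAt Vt (2 * (ut t - m * Real.sinh (Vt t))) t) →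
          V 0 = Vt 0 →
          V 0 ∈ Set.Icc (-Real.arsinh (1 / m)) (Real.arsinh (1 / m)) →
          (∫ t in (0:ℝ)..S, |ut t - squareWave T t|) ≤
              2 * ((⌊S / T⌋ : ℝ) + 1) ^ 2 * η ∧
          ∀ t ∈ Set.Icc (0:ℝ) S, |Vt t - V t| ≤ C * η := by
  obtain ⟨K, hKdef⟩ : ∃ K : ℕ, K = (⌊S / T⌋).toNat + 1 := ⟨_, rfl⟩
  have hfl0 : (0:ℤ) ≤ ⌊S / T⌋ := Int.floor_nonneg.2 (by positivity)
  have hcast : ((⌊S / T⌋.toNat : ℕ) : ℝ) = ((⌊S / T⌋ : ℤ) : ℝ) := by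
    exact_mod_cast congrArg (Int.cast : ℤ → ℝ) (Int.toNat_of_nonneg hfl0)
  have hKr : ((K:ℕ):ℝ) = (⌊S / T⌋ : ℝ) + 1 := by
    rw [hKdef]; push_cast; linarith [hcast]
  have hfl0' : (0:ℝ) ≤ ((⌊S / T⌋:ℤ):ℝ) := by exact_mod_cast hfl0
  have hK1 : (1:ℝ) ≤ (K:ℝ) := by rw [hKr]; linarith
  have hKpos : (0:ℝ) < K := by linarith
  have hSK : S < (K:ℝ) * T := by
    rw [hKr]
    have := Int.lt_floor_add_one (S / T)
    calc S = S / T * T := by field_simp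
    _ < ((⌊S / T⌋:ℝ) + 1) * T := by
        apply mul_lt_mul_of_pos_right this hT
  have hKT : (K:ℝ) * T ≤ S + T := by
    rw [hKr]
    have := Int.floor_le (S / T)
    have : ((⌊S / T⌋:ℝ) + 1) * T ≤ (S / T + 1) * T := by nlinarith
    calc ((⌊S / T⌋:ℝ) + 1) * T ≤ (S / T + 1) * T := this
    _ = S + T := by field_simp
  refine ⟨4 * ((⌊S / T⌋ : ℝ) + 1) ^ 2, min (((K:ℝ) * T - S) / (2 * K)) (T / (4 * K)),
    lt_min (div_pos (by linarith) (by positivity)) (by positivity), ?_⟩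
  intro η hη hηle ut ts hts0 htsm hut htsb V Vt hVc hVtc hV' hVt' hV0 _
  -- basic eta bounds
  have hη1 : (K:ℝ) * η ≤ ((K:ℝ) * T - S) / 2 := by
    have := le_trans hηle (min_le_left _ _)
    rw [le_div_iff₀ (by positivity : (0:ℝ) < 2 * (K:ℝ))] at this
    nlinarith
  have hη2 : (K:ℝ) * η ≤ T / 4 := by
    have := le_trans hηle (min_le_right _ _)
    rw [le_div_iff₀ (by positivity : (0:ℝ) < 4 * (K:ℝ))] at this
    nlinarith
  -- switching-time bounds for j ≤ K
  have hb : ∀ j : ℕ, j ≤ K → |ts j - (j:ℝ) * T| ≤ (j:ℝ) * η := by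
    intro j hj
    apply htsb
    have : ((j:ℕ):ℝ) ≤ (K:ℝ) := by exact_mod_cast hj
    nlinarith
  have hjη : ∀ j : ℕ, j ≤ K → (j:ℝ) * η ≤ T / 4 := by
    intro j hj
    have : ((j:ℕ):ℝ) ≤ (K:ℝ) := by exact_mod_cast hj
    nlinarith
  have htsK : S < ts K := by
    have h1 := hb K le_rfl
    have h2 := abs_le.1 h1
    nlinarith
  -- coverage of [0,S] by the Ico's
  have hcov : ∀ t : ℝ, 0 ≤ t → t ≤ S → ∃ j : ℕ, j < K ∧ ts j ≤ t ∧ t < ts (j + 1) := by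
    intro t ht0 htS
    have hPK : t < ts K := lt_of_le_of_lt htS htsK
    classical
    have hex : ∃ n : ℕ, t < ts n := ⟨K, hPK⟩
    set j := Nat.find hex with hjdef
    have hj : t < ts j := Nat.find_spec hex
    have hjK : j ≤ K := Nat.find_le hPK
    have hj0 : j ≠ 0 := by
      intro h
      rw [h] at hj
      rw [hts0] at hj
      linarith
    obtain ⟨i, hi'⟩ := Nat.exists_eq_succ_of_ne_zero hj0
    have hi : ¬ t < ts i := by
      rw [hjdef] at hi'
      exact Nat.find_min hex (by omega)
    refine ⟨i, by omega, not_lt.1 hi, ?_⟩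
    rw [show i + 1 = i.succ from rfl, ← hi']
    exact hj
  have hut1 : ∀ t : ℝ, 0 ≤ t → t ≤ S → |ut t| = 1 := by
    intro t ht0 htS
    obtain ⟨j, _, h1, h2⟩ := hcov t ht0 htS
    rw [hut j t ⟨h1, h2⟩]
    simp [abs_pow]
  have hdiff2 : ∀ t : ℝ, 0 ≤ t → t ≤ S → |ut t - squareWave T t| ≤ 2 := by
    intro t ht0 htS
    calc |ut t - squareWave T t| ≤ |ut t| + |squareWave T t| := abs_sub _ _
    _ = 2 := by rw [hut1 t ht0 htS, squareWave_abs]; norm_num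
  -- the floor index
  have hfloor : ∀ t : ℝ, 0 ≤ t → t ≤ S → ∃ j : ℕ, j < K ∧ (j:ℝ) * T ≤ t ∧ t < ((j:ℝ) + 1) * T := by
    intro t ht0 htS
    have h0 : (0:ℤ) ≤ ⌊t / T⌋ := Int.floor_nonneg.2 (by positivity)
    have hc : ((((⌊t / T⌋).toNat : ℕ)):ℝ) = ((⌊t / T⌋ : ℤ):ℝ) := by
      exact_mod_cast congrArg (Int.cast : ℤ → ℝ) (Int.toNat_of_nonneg h0)
    refine ⟨(⌊t / T⌋).toNat, ?_, ?_, ?_⟩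
    · have h1 : ⌊t / T⌋ ≤ ⌊S / T⌋ := Int.floor_le_floor (by gcongr)
      rw [hKdef]; omega
    · have h2 := Int.floor_le (t / T)
      rw [hc]
      calc ((⌊t / T⌋:ℤ):ℝ) * T ≤ t / T * T := mul_le_mul_of_nonneg_right h2 hT.le
      _ = t := by field_simp
    · have h2 := Int.lt_floor_add_one (t / T)
      rw [hc]
      calc t = t / T * T := by field_simp
      _ < (((⌊t / T⌋:ℤ):ℝ) + 1) * T := mul_lt_mul_of_pos_right h2 hT
  -- mismatch only inside the bad intervals
  have hmis : ∀ t : ℝ, 0 ≤ t → t ≤ S →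
      (∀ j : ℕ, j ≤ K → t ∉ Set.uIcc ((j:ℝ) * T) (ts j)) → ut t = squareWave T t := by
    intro t ht0 htS hnot
    obtain ⟨j, hjK, hj1, hj2⟩ := hfloor t ht0 htS
    rw [squareWave_eq hT j hj1 hj2]
    apply hut j
    constructor
    · by_contra hc
      push_neg at hc
      exact hnot j hjK.le (Set.mem_uIcc.2 (Or.inl ⟨hj1, hc.le⟩))
    · by_contra hc
      push_neg at hc
      refine hnot (j+1) hjK ?_
      apply Set.mem_uIcc.2 (Or.inr ⟨hc, ?_⟩)
      push_cast
      linarith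
  constructor
  · -- Part 1 : the integral bound
    classical
    set u : ℝ → ℝ := squareWave T with hu
    set f : ℝ → ℝ := fun t => |ut t - u t| with hf
    set g : ℝ → ℝ := fun t => ∑ j ∈ Finset.range K,
      (Set.Ico (ts j) (ts (j+1))).indicator (fun s => |(-1:ℝ)^j - u s|) t with hg
    set h : ℝ → ℝ := fun t => ∑ j ∈ Finset.range (K+1),
      (Set.uIcc ((j:ℝ) * T) (ts j)).indicator (fun _ => (2:ℝ)) t with hh
    have hfg : ∀ t ∈ Set.Icc (0:ℝ) S, f t = g t := by
      intro t ht
      obtain ⟨j, hjK, h1, h2⟩ := hcov t ht.1 ht.2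
      show |ut t - u t| = ∑ j ∈ Finset.range K,
        (Set.Ico (ts j) (ts (j+1))).indicator (fun s => |(-1:ℝ)^j - u s|) t
      rw [Finset.sum_eq_single j]
      · rw [Set.indicator_of_mem (Set.mem_Ico.mpr ⟨h1, h2⟩), hut j t ⟨h1, h2⟩]
      · intro i hi hij
        apply Set.indicator_of_notMem
        intro hmem
        rcases lt_or_gt_of_ne hij with hlt | hgt
        · have : ts (i+1) ≤ ts j := htsm.monotone (by omega)
          exact absurd hmem.2 (not_lt.2 (le_trans this h1))
        · have : ts (j+1) ≤ ts i := htsm.monotone (by omega)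
          exact absurd hmem.1 (not_le.2 (lt_of_lt_of_le h2 this))
      · intro hj; exact absurd (Finset.mem_range.2 hjK) hj
    have hgmeas : Measurable g := by
      apply Finset.measurable_sum
      intro j _
      exact ((measurable_const.sub (squareWave_measurable T)).abs).indicator measurableSet_Ico
    have hgint : MeasureTheory.IntegrableOn g (Set.Ioc 0 S) := by
      apply MeasureTheory.Integrable.mono' (MeasureTheory.integrable_const (2:ℝ))
        hgmeas.aestronglyMeasurable
      filter_upwards [MeasureTheory.ae_restrict_mem measurableSet_Ioc] with t ht
      have ht' : t ∈ Set.Icc (0:ℝ) S := ⟨ht.1.le, ht.2⟩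
      rw [Real.norm_eq_abs, ← hfg t ht']
      show |(|ut t - u t|)| ≤ 2
      rw [abs_abs]
      exact hdiff2 t ht'.1 ht'.2
    have hhint : MeasureTheory.IntegrableOn h (Set.Ioc 0 S) := by
      apply MeasureTheory.integrable_finset_sum
      intro j _
      exact (MeasureTheory.integrable_const (2:ℝ)).indicator measurableSet_uIcc
    have hIg : IntervalIntegrable g MeasureTheory.volume 0 S :=
      (intervalIntegrable_iff_integrableOn_Ioc_of_le hS.le).2 hgint
    have hIh : IntervalIntegrable h MeasureTheory.volume 0 S :=
      (intervalIntegrable_iff_integrableOn_Ioc_of_le hS.le).2 hhint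
    have hgh : ∀ t ∈ Set.Icc (0:ℝ) S, g t ≤ h t := by
      intro t ht
      rw [← hfg t ht]
      by_cases hx : ∃ j, j ≤ K ∧ t ∈ Set.uIcc ((j:ℝ) * T) (ts j)
      · obtain ⟨j, hjK, hmem⟩ := hx
        calc f t ≤ 2 := hdiff2 t ht.1 ht.2
        _ = (Set.uIcc ((j:ℝ) * T) (ts j)).indicator (fun _ => (2:ℝ)) t := by
            rw [Set.indicator_of_mem hmem]
        _ ≤ h t := by
            apply Finset.single_le_sum (f := fun i : ℕ =>
              (Set.uIcc ((i:ℝ) * T) (ts i)).indicator (fun _ => (2:ℝ)) t)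
            · intro i _
              exact Set.indicator_nonneg (fun _ _ => by norm_num) t
            · exact Finset.mem_range.2 (Nat.lt_succ_of_le hjK)
      · push_neg at hx
        have heq : ut t = u t := hmis t ht.1 ht.2 hx
        show |ut t - u t| ≤ h t
        rw [heq, sub_self, abs_zero]
        apply Finset.sum_nonneg
        intro i _
        exact Set.indicator_nonneg (fun _ _ => by norm_num) t
    have key : (∫ t in (0:ℝ)..S, f t) ≤ 2 * ((K:ℝ))^2 * η := by
      have e1 : (∫ t in (0:ℝ)..S, f t) = ∫ t in (0:ℝ)..S, g t := by
        apply intervalIntegral.integral_congr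
        rw [Set.uIcc_of_le hS.le]
        exact hfg
      have e2 : (∫ t in (0:ℝ)..S, g t) ≤ ∫ t in (0:ℝ)..S, h t :=
        intervalIntegral.integral_mono_on hS.le hIg hIh hgh
      have hint1 : ∀ j ∈ Finset.range (K+1), IntervalIntegrable
          (fun t => (Set.uIcc ((j:ℝ) * T) (ts j)).indicator (fun _ => (2:ℝ)) t)
          MeasureTheory.volume 0 S := by
        intro j _
        exact (intervalIntegrable_iff_integrableOn_Ioc_of_le hS.le).2
          ((MeasureTheory.integrable_const (2:ℝ)).indicator measurableSet_uIcc)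
      have e3 : (∫ t in (0:ℝ)..S, h t) ≤ ∑ j ∈ Finset.range (K+1), 2 * ((j:ℝ) * η) := by
        simp only [hh]
        rw [intervalIntegral.integral_finset_sum hint1]
        · apply Finset.sum_le_sum
          intro j hj
          have hj' : j ≤ K := Nat.lt_succ_iff.1 (Finset.mem_range.1 hj)
          have hterm : (∫ t in (0:ℝ)..S,
              (Set.uIcc ((j:ℝ) * T) (ts j)).indicator (fun _ => (2:ℝ)) t)
              = 2 * (MeasureTheory.volume (Set.Ioc 0 S ∩ Set.uIcc ((j:ℝ) * T) (ts j))).toReal := by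
            rw [intervalIntegral.integral_of_le hS.le,
              MeasureTheory.setIntegral_indicator measurableSet_uIcc,
              MeasureTheory.setIntegral_const]
            rw [smul_eq_mul, mul_comm]
            rfl
          rw [hterm]
          have hvol : (MeasureTheory.volume (Set.Ioc 0 S ∩ Set.uIcc ((j:ℝ) * T) (ts j))).toReal
              ≤ |ts j - (j:ℝ) * T| := by
            have h1 : MeasureTheory.volume (Set.Ioc 0 S ∩ Set.uIcc ((j:ℝ) * T) (ts j))
                ≤ MeasureTheory.volume (Set.uIcc ((j:ℝ) * T) (ts j)) :=
              MeasureTheory.measure_mono Set.inter_subset_right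
            have h2 : MeasureTheory.volume (Set.uIcc ((j:ℝ) * T) (ts j))
                = ENNReal.ofReal |ts j - (j:ℝ) * T| := Real.volume_interval
            calc (MeasureTheory.volume (Set.Ioc 0 S ∩ Set.uIcc ((j:ℝ) * T) (ts j))).toReal
                ≤ (MeasureTheory.volume (Set.uIcc ((j:ℝ) * T) (ts j))).toReal := by
                  apply ENNReal.toReal_mono _ h1
                  rw [h2]; exact ENNReal.ofReal_ne_top
            _ = |ts j - (j:ℝ) * T| := by rw [h2, ENNReal.toReal_ofReal (abs_nonneg _)]
          have h4 := hb j hj'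
          linarith
      have e4 : ∑ j ∈ Finset.range (K+1), 2 * ((j:ℝ) * η) ≤ 2 * ((K:ℝ))^2 * η := by
        have h1 : (∑ j ∈ Finset.range (K+1), 2 * ((j:ℝ) * η))
            = ((∑ j ∈ Finset.range (K+1), j : ℕ) : ℝ) * (2 * η) := by
          rw [Nat.cast_sum, Finset.sum_mul]
          apply Finset.sum_congr rfl
          intros; ring
        have h2 : ((∑ j ∈ Finset.range (K+1), j : ℕ) : ℝ) * 2 = ((K:ℝ) + 1) * K := by
          have h0 := Finset.sum_range_id_mul_two (K+1)
          have h3 : (((∑ j ∈ Finset.range (K+1), j) * 2 : ℕ) : ℝ)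
              = (((K+1) * ((K+1)-1) : ℕ) : ℝ) := by exact_mod_cast congrArg (Nat.cast : ℕ → ℝ) h0
          push_cast [Nat.add_sub_cancel] at h3
          push_cast
          linarith
        rw [h1]
        calc ((∑ j ∈ Finset.range (K+1), j : ℕ) : ℝ) * (2 * η)
            = (((∑ j ∈ Finset.range (K+1), j : ℕ) : ℝ) * 2) * η := by ring
        _ = ((K:ℝ) + 1) * K * η := by rw [h2]
        _ ≤ 2 * ((K:ℝ))^2 * η := by
            nlinarith [mul_nonneg (mul_nonneg hKpos.le (sub_nonneg.2 hK1)) hη.le]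
      linarith
    rw [← hKr]
    exact key
  · -- Part 2 : the sup bound
    classical
    set u : ℝ → ℝ := squareWave T with hu
    set w : ℝ → ℝ := fun t => Vt t - V t with hw
    have hwc : ContinuousOn w (Set.Icc 0 S) := hVtc.sub hVc
    have hw0 : w 0 = 0 := by simp [hw, hV0]
    set p : ℕ → ℝ := fun j => min ((j:ℝ) * T) (ts j) with hp
    set q : ℕ → ℝ := fun j => max ((j:ℝ) * T) (ts j) with hq
    have hq0 : ∀ j : ℕ, 0 ≤ q j := by
      intro j
      exact le_trans (by positivity) (le_max_left _ _)
    have hpl : ∀ j : ℕ, j ≤ K → (j:ℝ) * T - (j:ℝ) * η ≤ p j := by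
      intro j hj
      have h1 := (abs_le.1 (hb j hj)).1
      exact le_min (by nlinarith [Nat.cast_nonneg (α := ℝ) j, hη.le]) (by linarith)
    have hqu : ∀ j : ℕ, j ≤ K → q j ≤ (j:ℝ) * T + (j:ℝ) * η := by
      intro j hj
      have h1 := (abs_le.1 (hb j hj)).2
      exact max_le (by nlinarith [Nat.cast_nonneg (α := ℝ) j, hη.le]) (by linarith)
    have hpq : ∀ j : ℕ, j ≤ K → q j - p j ≤ (j:ℝ) * η := by
      intro j hj
      have h1 := abs_le.1 (hb j hj)
      rcases le_total ((j:ℝ) * T) (ts j) with hc | hc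
      · rw [hq, hp]; simp only [max_eq_right hc, min_eq_left hc]; linarith [h1.2]
      · rw [hq, hp]; simp only [max_eq_left hc, min_eq_right hc]; linarith [h1.1]
    have hqp : ∀ j : ℕ, j + 1 ≤ K → q j ≤ p (j + 1) := by
      intro j hj
      have h1 := hqu j (by omega)
      have h2 := hpl (j+1) hj
      have h3 := hjη j (by omega)
      have h4 := hjη (j+1) hj
      push_cast at h2 h4
      linarith
    have hwderiv : ∀ x, x ∈ Set.Ioo (0:ℝ) S → (∀ n : ℤ, x ≠ (n:ℝ) * T) →
        (∀ i : ℕ, x ≠ ts i) →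
        HasDerivAt w (2 * (ut x - u x) - 2 * m * (Real.sinh (Vt x) - Real.sinh (V x))) x := by
      intro x hx h1 h2
      have hd := (hVt' x hx h2).sub (hV' x hx h1)
      have e : (2 * (ut x - u x) - 2 * m * (Real.sinh (Vt x) - Real.sinh (V x)))
          = 2 * (ut x - m * Real.sinh (Vt x)) - 2 * (squareWave T x - m * Real.sinh (V x)) := by
        rw [hu]; ring
      rw [e]; exact hd
    have hsinh : ∀ a b : ℝ, 0 ≤ (a - b) * (Real.sinh a - Real.sinh b) := by
      intro a b
      rcases le_total a b with hc | hc
      · have h1 : Real.sinh a ≤ Real.sinh b := Real.sinh_le_sinh.2 hc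
        nlinarith
      · have h1 : Real.sinh b ≤ Real.sinh a := Real.sinh_le_sinh.2 hc
        nlinarith
    -- decay on good intervals
    have L1 : ∀ j : ℕ, j + 1 ≤ K → ∀ a b : ℝ, 0 ≤ a → b ≤ S → a ≤ b → q j ≤ a →
        b ≤ p (j + 1) → |w b| ≤ |w a| := by
      intro j hjK a b ha0 hbS hab hqa hbp
      have hint : ∀ x ∈ Set.Ioo a b,
          HasDerivAt w (-(2 * m) * (Real.sinh (Vt x) - Real.sinh (V x))) x := by
        intro x hx
        have hx0 : 0 < x := lt_of_le_of_lt ha0 hx.1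
        have hxS : x < S := lt_of_lt_of_le hx.2 hbS
        have hxq : q j < x := lt_of_le_of_lt hqa hx.1
        have hxp : x < p (j + 1) := lt_of_lt_of_le hx.2 hbp
        have hxT : (j:ℝ) * T < x := lt_of_le_of_lt (le_max_left _ _) hxq
        have hxT2 : x < ((j:ℝ) + 1) * T := by
          have h5 : p (j+1) ≤ ((j+1:ℕ):ℝ) * T := min_le_left _ _
          push_cast at h5
          linarith
        have hxts : ts j < x := lt_of_le_of_lt (le_max_right _ _) hxq
        have hxts2 : x < ts (j + 1) := lt_of_lt_of_le hxp (min_le_right _ _)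
        have hne1 : ∀ n : ℤ, x ≠ (n:ℝ) * T := by
          intro n hxn
          rcases le_or_gt n (j:ℤ) with hc | hc
          · have h5 : (n:ℝ) ≤ (j:ℝ) := by exact_mod_cast hc
            have h6 : (n:ℝ) * T ≤ (j:ℝ) * T := by nlinarith
            rw [hxn] at hxT; linarith
          · have h5 : (j:ℝ) + 1 ≤ (n:ℝ) := by exact_mod_cast hc
            have h6 : ((j:ℝ) + 1) * T ≤ (n:ℝ) * T := by nlinarith
            rw [hxn] at hxT2; linarith
        have hne2 : ∀ i : ℕ, x ≠ ts i := by
          intro i hxi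
          rcases le_or_gt i j with hc | hc
          · have h5 : ts i ≤ ts j := htsm.monotone hc
            rw [hxi] at hxts; linarith
          · have h5 : ts (j + 1) ≤ ts i := htsm.monotone hc
            rw [hxi] at hxts2; linarith
        have hd := hwderiv x ⟨hx0, hxS⟩ hne1 hne2
        have hux : ut x = u x := by
          rw [hut j x ⟨hxts.le, hxts2⟩, hu, squareWave_eq hT j hxT.le hxT2]
        convert hd using 1
        rw [hux]
        ring
      rcases eq_or_lt_of_le hab with rfl | hab'
      · exact le_rfl
      have hsub : Set.Icc a b ⊆ Set.Icc 0 S := Set.Icc_subset_Icc ha0 hbS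
      have hanti : AntitoneOn (fun t => (w t)^2) (Set.Icc a b) := by
        apply antitoneOn_of_deriv_nonpos (convex_Icc a b) ((hwc.mono hsub).pow 2)
        · intro x hx
          rw [interior_Icc] at hx
          exact ((hint x hx).pow 2).differentiableAt.differentiableWithinAt
        · intro x hx
          rw [interior_Icc] at hx
          rw [((hint x hx).pow 2).deriv]
          norm_num
          rw [show w x = Vt x - V x from rfl]
          nlinarith [mul_nonneg hm.le (hsinh (Vt x) (V x))]
      have hkey := hanti (Set.left_mem_Icc.2 hab) (Set.right_mem_Icc.2 hab) hab
      rw [← Real.sqrt_sq_eq_abs, ← Real.sqrt_sq_eq_abs]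
      exact Real.sqrt_le_sqrt hkey
    -- growth on bad intervals
    have L2 : ∀ j : ℕ, 1 ≤ j → j ≤ K → ∀ a b : ℝ, 0 ≤ a → b ≤ S → a ≤ b → p j ≤ a →
        b ≤ q j → |w b| ≤ |w a| + 4 * (b - a) := by
      intro j hj1 hjK a b ha0 hbS hab hpa hbq
      rcases eq_or_lt_of_le hab with rfl | hab'
      · simp
      have hsub : Set.Icc a b ⊆ Set.Icc 0 S := Set.Icc_subset_Icc ha0 hbS
      have hjr : (1:ℝ) ≤ (j:ℝ) := by exact_mod_cast hj1
      have hintd : ∀ x ∈ Set.Ioo a b,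
          HasDerivAt w (2 * (ut x - u x) - 2 * m * (Real.sinh (Vt x) - Real.sinh (V x))) x := by
        intro x hx
        have hx0 : 0 < x := lt_of_le_of_lt ha0 hx.1
        have hxS : x < S := lt_of_lt_of_le hx.2 hbS
        have hxp : p j < x := lt_of_le_of_lt hpa hx.1
        have hxq : x < q j := lt_of_lt_of_le hx.2 hbq
        have hplb := hpl j hjK
        have hqub := hqu j hjK
        have hjη1 := hjη j hjK
        have hne2 : ∀ i : ℕ, x ≠ ts i := by
          intro i hxi
          rcases lt_trichotomy i j with hc | hc | hc
          · have h5 : ts i ≤ ts (j - 1) := htsm.monotone (by omega)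
            have h6 := (abs_le.1 (hb (j-1) (by omega))).2
            have h7 : ((j - 1 : ℕ):ℝ) = (j:ℝ) - 1 := by
              push_cast [Nat.cast_sub hj1]; ring
            rw [h7] at h6
            have h8 : ((j:ℝ) - 1) * η ≤ (j:ℝ) * η := by nlinarith [hη.le]
            rw [hxi] at hxp
            nlinarith
          · subst hc
            rcases le_total ((i:ℝ) * T) (ts i) with hc2 | hc2
            · have : q i = ts i := max_eq_right hc2
              rw [hxi, this] at hxq; linarith
            · have : p i = ts i := min_eq_right hc2
              rw [hxi, this] at hxp; linarith
          · rcases le_or_gt (j + 1) K with hc2 | hc2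
            · have h5 : ts (j + 1) ≤ ts i := htsm.monotone (by omega)
              have h6 : p (j+1) ≤ ts (j+1) := min_le_right _ _
              have h7 := hqp j hc2
              rw [hxi] at hxq
              linarith
            · have hjK2 : j = K := by omega
              have h5 : ts K ≤ ts i := htsm.monotone (by omega)
              rw [hxi] at hxS
              linarith
        have hne1 : ∀ n : ℤ, x ≠ (n:ℝ) * T := by
          intro n hxn
          rcases lt_trichotomy n (j:ℤ) with hc | hc | hc
          · have h5 : (n:ℝ) ≤ (j:ℝ) - 1 := by exact_mod_cast Int.le_sub_one_of_lt hc
            have h6 : (n:ℝ) * T ≤ ((j:ℝ) - 1) * T := by nlinarith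
            rw [hxn] at hxp
            nlinarith
          · rcases le_total ((j:ℝ) * T) (ts j) with hc2 | hc2
            · have h7 : p j = (j:ℝ) * T := min_eq_left hc2
              rw [hxn, hc] at hxp
              rw [h7] at hxp
              push_cast at hxp
              linarith
            · have h7 : q j = (j:ℝ) * T := max_eq_left hc2
              rw [hxn, hc] at hxq
              rw [h7] at hxq
              push_cast at hxq
              linarith
          · have h5 : (j:ℝ) + 1 ≤ (n:ℝ) := by exact_mod_cast hc
            have h6 : ((j:ℝ) + 1) * T ≤ (n:ℝ) * T := by nlinarith
            rw [hxn] at hxq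
            nlinarith
        exact hwderiv x ⟨hx0, hxS⟩ hne1 hne2
      by_contra hcon
      push_neg at hcon
      set δ : ℝ := (|w b| - (|w a| + 4 * (b - a))) / 2 with hδdef
      have hδ : 0 < δ := by rw [hδdef]; linarith
      have hcont : ContinuousOn (fun t => Real.sqrt ((w t)^2 + δ^2) - 4 * t) (Set.Icc a b) := by
        apply ContinuousOn.sub
        · exact (((hwc.mono hsub).pow 2).add continuousOn_const).sqrt
        · exact (continuous_const.mul continuous_id).continuousOn
      have hanti : AntitoneOn (fun t => Real.sqrt ((w t)^2 + δ^2) - 4 * t) (Set.Icc a b) := by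
        apply antitoneOn_of_deriv_nonpos (convex_Icc a b) hcont
        · intro x hx
          rw [interior_Icc] at hx
          have hd := hintd x hx
          have hpos : 0 < (w x)^2 + δ^2 := by positivity
          have hin : HasDerivAt (fun t => (w t)^2 + δ^2)
              (2 * w x * (2 * (ut x - u x) - 2 * m * (Real.sinh (Vt x) - Real.sinh (V x)))) x := by
            have := (hd.pow 2).add_const (δ^2)
            simpa using this
          have hsq : HasDerivAt (fun t => Real.sqrt ((w t)^2 + δ^2))
              (1 / (2 * Real.sqrt ((w x)^2 + δ^2)) *
                (2 * w x * (2 * (ut x - u x) - 2 * m * (Real.sinh (Vt x) - Real.sinh (V x))))) x :=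
            (Real.hasDerivAt_sqrt hpos.ne').comp x hin
          have h4t : HasDerivAt (fun t : ℝ => 4 * t) 4 x := by
            simpa using (hasDerivAt_id x).const_mul (4:ℝ)
          exact (hsq.sub h4t).differentiableAt.differentiableWithinAt
        · intro x hx
          rw [interior_Icc] at hx
          have hd := hintd x hx
          have hpos : 0 < (w x)^2 + δ^2 := by positivity
          have hin : HasDerivAt (fun t => (w t)^2 + δ^2)
              (2 * w x * (2 * (ut x - u x) - 2 * m * (Real.sinh (Vt x) - Real.sinh (V x)))) x := by
            have := (hd.pow 2).add_const (δ^2)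
            simpa using this
          have hsq : HasDerivAt (fun t => Real.sqrt ((w t)^2 + δ^2))
              (1 / (2 * Real.sqrt ((w x)^2 + δ^2)) *
                (2 * w x * (2 * (ut x - u x) - 2 * m * (Real.sinh (Vt x) - Real.sinh (V x))))) x :=
            (Real.hasDerivAt_sqrt hpos.ne').comp x hin
          have h4t : HasDerivAt (fun t : ℝ => 4 * t) 4 x := by
            simpa using (hasDerivAt_id x).const_mul (4:ℝ)
          rw [HasDerivAt.deriv (f := fun t => Real.sqrt ((w t)^2 + δ^2) - 4 * t) (hsq.sub h4t)]
          have hs : 0 < Real.sqrt ((w x)^2 + δ^2) := Real.sqrt_pos.2 hpos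
          have hwle : |w x| ≤ Real.sqrt ((w x)^2 + δ^2) := by
            rw [← Real.sqrt_sq_eq_abs]
            exact Real.sqrt_le_sqrt (by nlinarith [sq_nonneg δ])
          have hx0 : (0:ℝ) ≤ x := le_trans ha0 hx.1.le
          have hxS : x ≤ S := le_trans hx.2.le hbS
          have hd2 : |ut x - u x| ≤ 2 := hdiff2 x hx0 hxS
          have hkey : w x * (2 * (ut x - u x) - 2 * m * (Real.sinh (Vt x) - Real.sinh (V x)))
              ≤ 4 * Real.sqrt ((w x)^2 + δ^2) := by
            have h1 : w x * (2 * (ut x - u x)) ≤ 4 * |w x| := by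
              calc w x * (2 * (ut x - u x)) ≤ |w x * (2 * (ut x - u x))| := le_abs_self _
              _ = |w x| * (2 * |ut x - u x|) := by rw [abs_mul, abs_mul]; simp [abs_of_nonneg]
              _ ≤ |w x| * 4 := by nlinarith [abs_nonneg (w x)]
              _ = 4 * |w x| := by ring
            have h2 : 0 ≤ m * ((Vt x - V x) * (Real.sinh (Vt x) - Real.sinh (V x))) :=
              mul_nonneg hm.le (hsinh (Vt x) (V x))
            have h3 : w x = Vt x - V x := rfl
            rw [← h3] at h2
            nlinarith [h1, h2, hwle, abs_nonneg (w x)]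
          have heq : 1 / (2 * Real.sqrt ((w x)^2 + δ^2)) *
              (2 * w x * (2 * (ut x - u x) - 2 * m * (Real.sinh (Vt x) - Real.sinh (V x))))
              = (w x * (2 * (ut x - u x) - 2 * m * (Real.sinh (Vt x) - Real.sinh (V x))))
                / Real.sqrt ((w x)^2 + δ^2) := by
            field_simp
          rw [heq, sub_nonpos, div_le_iff₀ hs]
          linarith [hkey]
      have hfb := hanti (Set.left_mem_Icc.2 hab) (Set.right_mem_Icc.2 hab) hab
      have h5 : |w b| ≤ Real.sqrt ((w b)^2 + δ^2) := by
        rw [← Real.sqrt_sq_eq_abs]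
        exact Real.sqrt_le_sqrt (by nlinarith [sq_nonneg δ])
      have h6 : Real.sqrt ((w a)^2 + δ^2) ≤ |w a| + δ := by
        have h7 : (w a)^2 + δ^2 ≤ (|w a| + δ)^2 := by
          nlinarith [abs_nonneg (w a), sq_abs (w a)]
        calc Real.sqrt ((w a)^2 + δ^2) ≤ Real.sqrt ((|w a| + δ)^2) := Real.sqrt_le_sqrt h7
        _ = |w a| + δ := Real.sqrt_sq (by positivity)
      have h8 : |w b| ≤ |w a| + δ + 4 * (b - a) := by
        simp only [sub_le_iff_le_add] at hfb
        linarith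
      rw [hδdef] at h8
      linarith
    -- main induction along the switching structure
    have main : ∀ j : ℕ, j ≤ K → ∀ t : ℝ, 0 ≤ t → t ≤ S → t ≤ q j →
        |w t| ≤ 2 * η * (j:ℝ) * ((j:ℝ) + 1) := by
      intro j
      induction j with
      | zero =>
        intro _ t ht0 htS htq
        have hq00 : q 0 = 0 := by
          rw [hq]; simp [hts0]
        have ht00 : t = 0 := le_antisymm (by rw [hq00] at htq; exact htq) ht0
        rw [ht00, hw0]
        simp
      | succ j ih =>
        intro hjK t ht0 htS htq
        have hjK' : j ≤ K := by omega
        have hqj0 : 0 ≤ q j := hq0 j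
        have hbnd : 2 * η * (j:ℝ) * ((j:ℝ) + 1) ≤ 2 * η * ((j:ℝ) + 1) * ((j:ℝ) + 2) := by
          nlinarith [hη.le, Nat.cast_nonneg (α := ℝ) j]
        rcases le_or_gt t (q j) with hc | hc
        · have h1 := ih hjK' t ht0 htS hc
          push_cast
          linarith
        · rcases le_or_gt t (p (j+1)) with hc2 | hc2
          · have h1 : |w t| ≤ |w (q j)| := L1 j hjK (q j) t hqj0 htS hc.le le_rfl hc2
            have h2 := ih hjK' (q j) hqj0 (le_trans hc.le htS) le_rfl
            push_cast
            linarith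
          · have hqp' := hqp j hjK
            have hpS : p (j+1) ≤ S := le_trans hc2.le htS
            have hp0 : 0 ≤ p (j+1) := le_trans hqj0 hqp'
            have h1 : |w (p (j+1))| ≤ |w (q j)| :=
              L1 j hjK (q j) (p (j+1)) hqj0 hpS hqp' le_rfl le_rfl
            have h2 := ih hjK' (q j) hqj0 (le_trans hqp' hpS) le_rfl
            have h3 : |w t| ≤ |w (p (j+1))| + 4 * (t - p (j+1)) :=
              L2 (j+1) (by omega) hjK (p (j+1)) t hp0 htS hc2.le le_rfl htq
            have h4 : t - p (j+1) ≤ ((j:ℝ) + 1) * η := by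
              have h5 := hpq (j+1) hjK
              push_cast at h5
              linarith
            push_cast
            nlinarith [hη.le]
    intro t ht
    have htq : t ≤ q K := le_trans ht.2 (le_trans htsK.le (le_max_right _ _))
    have hfin := main K le_rfl t ht.1 ht.2 htq
    have hKK : 2 * η * (K:ℝ) * ((K:ℝ) + 1) ≤ 4 * ((K:ℝ))^2 * η := by
      nlinarith [mul_nonneg (mul_nonneg hKpos.le (sub_nonneg.2 hK1)) hη.le]
    calc |Vt t - V t| = |w t| := rfl
    _ ≤ 2 * η * (K:ℝ) * ((K:ℝ) + 1) := hfin
    _ ≤ 4 * ((K:ℝ))^2 * η := hKK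
    _ = 4 * ((⌊S / T⌋:ℝ) + 1)^2 * η := by rw [hKr]
end
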